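/- arXiv:0903.2716 — 5 statements merged into one kernel-verified Lean document; each statement's English description precedes it below -/
import Mathlib

section
/- Let Γ = (Γ(1),…,Γ(d)) : ℝ → ℝ^d be continuously differentiable. Then the canonical lift satisfies the Chen (multiplicative) property: for every n ≥ 2, every word (i_1,…,i_n) ∈ {1,…,d}^n, and all s, u, t ∈ ℝ, Γ^{cano,n}_{ts}(i_1,…,i_n) − Γ^{cano,n}_{tu}(i_1,…,i_n) − Γ^{cano,n}_{us}(i_1,…,i_n) = Σ_{k=1}^{n−1} Γ^{cano,k}_{tu}(i_1,…,i_k) · Γ^{cano,n−k}_{us}(i_{k+1},…,i_n). -/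
/-- The canonical lift of a path `Γ : ℝ → ℝ^d`: the nested iterated integrals
`Γ^{cano,n}_{ts}(i₁,…,iₙ) = ∫_s^t Γ'(i₁)(x₁) ∫_s^{x₁} Γ'(i₂)(x₂) ⋯ dx₂ dx₁`. -/
noncomputable def canoLift {d : ℕ} (Γ : ℝ → Fin d → ℝ) :
    (n : ℕ) → (Fin n → Fin d) → ℝ → ℝ → ℝ
  | 0, _, _, _ => 1
  | n + 1, w, t, s =>
      ∫ x in s..t, deriv (fun y => Γ y (w 0)) x * canoLift Γ n (fun j => w j.succ) x s

namespace ChenAux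

variable {d : ℕ} {Γ : ℝ → Fin d → ℝ}

lemma cano_idx (Γ : ℝ → Fin d → ℝ) {k k' : ℕ} (h : k = k') (vv : ℕ → Fin d) (a b : ℝ) :
    canoLift Γ k (fun j => vv j.1) a b = canoLift Γ k' (fun j => vv j.1) a b := by subst h; rfl

lemma cano_eq_one (Γ : ℝ → Fin d → ℝ) {k : ℕ} (hk : k = 0) (w : Fin k → Fin d) (a b : ℝ) :
    canoLift Γ k w a b = 1 := by subst hk; rfl

lemma contDeriv (hΓ : ContDiff ℝ 1 Γ) (i : Fin d) :
    Continuous (deriv fun y => Γ y i) := by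
  have h : ContDiff ℝ 1 fun y => Γ y i :=
    (ContinuousLinearMap.proj (R := ℝ) (φ := fun _ : Fin d => ℝ) i).contDiff.comp hΓ
  exact h.continuous_deriv le_rfl

lemma cano_cont (hΓ : ContDiff ℝ 1 Γ) (n : ℕ) (w : Fin n → Fin d) (s : ℝ) :
    Continuous fun x => canoLift Γ n w x s := by
  induction n with
  | zero => simpa [canoLift] using continuous_const
  | succ n ih =>
      have hg : Continuous fun x =>
          deriv (fun y => Γ y (w 0)) x * canoLift Γ n (fun j => w j.succ) x s :=
        (contDeriv hΓ _).mul (ih _)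
      simp only [canoLift]
      exact intervalIntegral.continuous_primitive (fun a b => hg.intervalIntegrable a b) s

lemma chen_full (hΓ : ContDiff ℝ 1 Γ) (s u : ℝ) :
    ∀ (n : ℕ) (v : ℕ → Fin d) (t : ℝ),
      canoLift Γ n (fun j => v j.1) t s =
        ∑ k ∈ Finset.range (n+1),
          canoLift Γ k (fun j => v j.1) t u *
            canoLift Γ (n - k) (fun j => v (k + j.1)) u s := by
  intro n
  induction n with
  | zero => intro v t; simp [canoLift]
  | succ n ih =>
      intro v t
      set f : ℝ → ℝ := deriv fun y => Γ y (v 0) with hf_def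
      have hf : Continuous f := contDeriv hΓ _
      have hcont := cano_cont hΓ (Γ := Γ)
      -- split the integral at u
      have split : canoLift Γ (n+1) (fun j : Fin (n+1) => v j.1) t s
          = canoLift Γ (n+1) (fun j : Fin (n+1) => v j.1) u s
            + ∫ x in u..t, f x * canoLift Γ n (fun j : Fin n => v (j.1+1)) x s := by
        simp only [canoLift, Fin.val_succ, Fin.val_zero]
        rw [← intervalIntegral.integral_add_adjacent_intervals
              ((show Continuous fun x => f x * canoLift Γ n (fun j : Fin n => v (j.1+1)) x s from
                hf.mul (hcont n _ s)).intervalIntegrable s u)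
              ((show Continuous fun x => f x * canoLift Γ n (fun j : Fin n => v (j.1+1)) x s from
                hf.mul (hcont n _ s)).intervalIntegrable u t)]
      have key : ∀ x : ℝ, f x * canoLift Γ n (fun j : Fin n => v (j.1+1)) x s
          = ∑ k ∈ Finset.range (n+1),
              (f x * canoLift Γ k (fun j : Fin k => v (j.1+1)) x u)
                * canoLift Γ (n - k) (fun j : Fin (n-k) => v ((k+1) + j.1)) u s := by
        intro x
        rw [ih (fun m => v (m+1)) x, Finset.mul_sum]
        refine Finset.sum_congr rfl fun k _ => ?_
        have hw : (fun j : Fin (n-k) => v (k + j.1 + 1))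
            = fun j : Fin (n-k) => v ((k+1) + j.1) := by
          funext j; congr 1; omega
        rw [← mul_assoc, hw]
      have int_eq : (∫ x in u..t, f x * canoLift Γ n (fun j : Fin n => v (j.1+1)) x s)
          = ∑ k ∈ Finset.range (n+1),
              canoLift Γ (k+1) (fun j : Fin (k+1) => v j.1) t u
                * canoLift Γ (n - k) (fun j : Fin (n-k) => v ((k+1) + j.1)) u s := by
        rw [intervalIntegral.integral_congr (fun x _ => key x),
          intervalIntegral.integral_finset_sum (fun k _ =>
            (show Continuous fun x => f x * canoLift Γ k (fun j : Fin k => v (j.1+1)) x u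
                * canoLift Γ (n - k) (fun j : Fin (n-k) => v ((k+1) + j.1)) u s from
              (((hf.mul (hcont k _ u))).mul continuous_const)).intervalIntegrable u t)]
        refine Finset.sum_congr rfl fun k _ => ?_
        rw [intervalIntegral.integral_mul_const]
        congr 1
      rw [split, int_eq, Finset.sum_range_succ' _ (n+1)]
      rw [add_comm]
      congr 1
      · refine Finset.sum_congr rfl fun k _ => ?_
        congr 1
        exact cano_idx Γ (by omega) (fun m => v (k+1+m)) u s
      · rw [cano_eq_one Γ rfl, one_mul]
        congr 1
        funext j
        rw [Nat.zero_add]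

end ChenAux

/-- The canonical lift of a continuously differentiable path satisfies the
multiplicative (Chen) property. -/
theorem canonical_lift_chen (d : ℕ) (Γ : ℝ → Fin d → ℝ) (hΓ : ContDiff ℝ 1 Γ)
    (n : ℕ) (hn : 2 ≤ n) (w : Fin n → Fin d) (s u t : ℝ) :
    canoLift Γ n w t s - canoLift Γ n w t u - canoLift Γ n w u s =
      ∑ k ∈ Finset.univ.filter (fun k : Fin n => 0 < k.1),
        canoLift Γ k.1 (fun j => w ⟨j.1, by have h1 := j.isLt; have h2 := k.isLt; omega⟩) t u *
          canoLift Γ (n - k.1)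
            (fun j => w ⟨k.1 + j.1, by have h1 := j.isLt; have h2 := k.isLt; omega⟩) u s := by
  have hn0 : 0 < n := by omega
  set v : ℕ → Fin d := fun m => if h : m < n then w ⟨m, h⟩ else w ⟨0, hn0⟩ with hv
  have hword : w = fun j : Fin n => v j.1 := by
    funext j; simp [hv, j.isLt]
  set g : ℕ → ℝ := fun k =>
    canoLift Γ k (fun j => v j.1) t u * canoLift Γ (n - k) (fun j => v (k + j.1)) u s with hg
  have hfull := ChenAux.chen_full hΓ s u n v t
  have hRHS : (∑ k ∈ Finset.univ.filter (fun k : Fin n => 0 < k.1),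
        canoLift Γ k.1 (fun j => w ⟨j.1, by have h1 := j.isLt; have h2 := k.isLt; omega⟩) t u *
          canoLift Γ (n - k.1)
            (fun j => w ⟨k.1 + j.1, by have h1 := j.isLt; have h2 := k.isLt; omega⟩) u s)
      = ∑ k ∈ Finset.range n, (if 0 < k then g k else 0) := by
    rw [Finset.sum_filter]
    rw [← Fin.sum_univ_eq_sum_range (fun k => if 0 < k then g k else 0) n]
    refine Finset.sum_congr rfl fun k _ => ?_
    congr 1
    rw [hg]
    congr 1
    · congr 1
      funext j
      simp only [hv]
      rw [dif_pos (by have := j.isLt; have := k.isLt; omega)]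
    · congr 1
      funext j
      simp only [hv]
      rw [dif_pos (by have := j.isLt; have := k.isLt; omega)]
  rw [hRHS]
  obtain ⟨m, rfl⟩ : ∃ m, n = m + 1 := ⟨n - 1, by omega⟩
  have hLs : canoLift Γ (m+1) w t s = ∑ k ∈ Finset.range (m+2), g k := hword ▸ hfull
  have htu : canoLift Γ (m+1) w t u = g (m+1) := by
    simp only [hg]
    rw [ChenAux.cano_eq_one Γ (Nat.sub_self (m+1)), mul_one, hword]
  have hus : canoLift Γ (m+1) w u s = g 0 := by
    simp only [hg]
    rw [ChenAux.cano_eq_one Γ rfl, one_mul, hword]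
    congr 1
    funext j
    rw [Nat.zero_add]
  have h1 : (∑ k ∈ Finset.range (m+2), g k)
      = (∑ k ∈ Finset.range (m+1), g k) + g (m+1) := Finset.sum_range_succ _ _
  have h2 : (∑ k ∈ Finset.range (m+1), g k)
      = (∑ i ∈ Finset.range m, g (i+1)) + g 0 := Finset.sum_range_succ' _ _
  have h3 : (∑ k ∈ Finset.range (m+1), (if 0 < k then g k else 0))
      = (∑ i ∈ Finset.range m, (if 0 < i+1 then g (i+1) else 0))
          + (if 0 < 0 then g 0 else 0) := Finset.sum_range_succ' _ _
  have h4 : (∑ i ∈ Finset.range m, (if 0 < i+1 then g (i+1) else 0))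
      = ∑ i ∈ Finset.range m, g (i+1) :=
    Finset.sum_congr rfl fun i _ => if_pos (Nat.succ_pos i)
  rw [hLs, htu, hus, h1, h2, h3, h4]
  simp
end

section
/- Let Γ = (Γ(1),…,Γ(d)) : ℝ → ℝ^d be continuously differentiable. Then the canonical lift satisfies the shuffle (geometric) property: for all n_1, n_2 ≥ 1, all words (i_1,…,i_{n_1}), (j_1,…,j_{n_2}) with letters in {1,…,d}, and all s, t ∈ ℝ, Γ^{cano,n_1}_{ts}(i_1,…,i_{n_1}) · Γ^{cano,n_2}_{ts}(j_1,…,j_{n_2}) = Σ_S Γ^{cano,n_1+n_2}_{ts}(k^S), where the sum is over all subsets S ⊆ {1,…,n_1+n_2} with |S| = n_1 and k^S is the word placing i_1,…,i_{n_1} in order at the positions of S and j_1,…,j_{n_2} in order at the remaining positions. -/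
/-- The word of length `n₁ + n₂` obtained by placing the letters of `u` in order at the
positions of `S` and the letters of `v` in order at the remaining positions. -/
noncomputable def shuffleWord {d n₁ n₂ : ℕ} (u : Fin n₁ → Fin d) (v : Fin n₂ → Fin d)
    (S : Finset (Fin (n₁ + n₂))) (hS : S.card = n₁) (m : Fin (n₁ + n₂)) : Fin d :=
  if hm : m ∈ S then u ((S.orderIsoOfFin hS).symm ⟨m, hm⟩)
  else v ((Sᶜ.orderIsoOfFin (by rw [Finset.card_compl, hS, Fintype.card_fin]; omega)).symm
      ⟨m, Finset.mem_compl.mpr hm⟩)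

namespace ShuffleAux

open Finset

variable {N : ℕ}

/-- The set of `j` with `j.succ ∈ S`. -/
def pre (S : Finset (Fin (N + 1))) : Finset (Fin N) :=
  Finset.univ.filter (fun j => j.succ ∈ S)

lemma mem_pre {S : Finset (Fin (N + 1))} {j : Fin N} : j ∈ pre S ↔ j.succ ∈ S := by
  simp [pre]

lemma pre_compl (S : Finset (Fin (N + 1))) : pre Sᶜ = (pre S)ᶜ := by
  ext j; simp [mem_pre]

/-- `Fin.succ` as an embedding (abbreviation). -/
def succE : Fin N ↪ Fin (N + 1) := ⟨Fin.succ, Fin.succ_injective N⟩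

lemma eq_insert {S : Finset (Fin (N + 1))} (h0 : (0 : Fin (N + 1)) ∈ S) :
    S = insert 0 ((pre S).map succE) := by
  ext m
  induction m using Fin.cases with
  | zero => simp [h0]
  | succ j =>
      simp only [mem_insert, mem_map, mem_pre, succE, Function.Embedding.coeFn_mk]
      constructor
      · intro h; exact Or.inr ⟨j, h, rfl⟩
      · rintro (h | ⟨i, hi, he⟩)
        · exact absurd h (Fin.succ_ne_zero j)
        · rwa [← Fin.succ_injective N he]

lemma eq_map {S : Finset (Fin (N + 1))} (h0 : (0 : Fin (N + 1)) ∉ S) :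
    S = (pre S).map succE := by
  ext m
  induction m using Fin.cases with
  | zero =>
      simp only [mem_map, mem_pre, succE, Function.Embedding.coeFn_mk]
      constructor
      · intro h; exact absurd h h0
      · rintro ⟨i, hi, he⟩; exact absurd he (Fin.succ_ne_zero i)
  | succ j =>
      simp only [mem_map, mem_pre, succE, Function.Embedding.coeFn_mk]
      constructor
      · intro h; exact ⟨j, h, rfl⟩
      · rintro ⟨i, hi, he⟩; rwa [← Fin.succ_injective N he]

lemma zero_not_mem_map (T : Finset (Fin N)) : (0 : Fin (N + 1)) ∉ T.map succE := by
  simp only [mem_map, succE, Function.Embedding.coeFn_mk]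
  rintro ⟨i, _, he⟩; exact Fin.succ_ne_zero i he

lemma pre_insert_map (T : Finset (Fin N)) : pre (insert 0 (T.map succE)) = T := by
  ext j
  simp [mem_pre, succE, Fin.succ_ne_zero, Fin.succ_injective N |>.eq_iff]

lemma pre_map (T : Finset (Fin N)) : pre (T.map succE) = T := by
  ext j
  simp [mem_pre, succE, Fin.succ_injective N |>.eq_iff]

lemma card_pre_mem {S : Finset (Fin (N + 1))} (h0 : (0 : Fin (N + 1)) ∈ S) :
    (pre S).card + 1 = S.card := by
  conv_rhs => rw [eq_insert h0]
  rw [card_insert_of_notMem (zero_not_mem_map _), card_map]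

lemma card_pre_notmem {S : Finset (Fin (N + 1))} (h0 : (0 : Fin (N + 1)) ∉ S) :
    (pre S).card = S.card := by
  conv_rhs => rw [eq_map h0]
  rw [card_map]

/-- Enumeration of a set containing `0`. -/
lemma orderEmbOfFin_mem_zero {S : Finset (Fin (N + 1))} (h0 : (0 : Fin (N + 1)) ∈ S) {k : ℕ}
    (hS : S.card = k + 1) (hT : (pre S).card = k) :
    (S.orderEmbOfFin hS 0 = 0) ∧
      ∀ j : Fin k, S.orderEmbOfFin hS j.succ = ((pre S).orderEmbOfFin hT j).succ := by
  set f : Fin (k + 1) → Fin (N + 1) :=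
    fun i => Fin.cases 0 (fun j => ((pre S).orderEmbOfFin hT j).succ) i with hf
  have hfs : ∀ x, f x ∈ S := by
    intro x
    induction x using Fin.cases with
    | zero => simpa [hf] using h0
    | succ j =>
        simp only [hf, Fin.cases_succ]
        exact mem_pre.mp ((pre S).orderEmbOfFin_mem hT j)
  have hmono : StrictMono f := by
    intro x y hxy
    induction y using Fin.cases with
    | zero => exact absurd hxy (Fin.not_lt_zero _)
    | succ j =>
        induction x using Fin.cases with
        | zero => simpa [hf] using Fin.succ_pos _
        | succ i =>
            simp only [hf, Fin.cases_succ]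
            exact Fin.succ_lt_succ_iff.mpr
              (((pre S).orderEmbOfFin hT).strictMono (Fin.succ_lt_succ_iff.mp hxy))
  have := Finset.orderEmbOfFin_unique hS hfs hmono
  constructor
  · rw [← congrFun this 0]; simp [hf]
  · intro j; rw [← congrFun this j.succ]; simp [hf]

/-- Enumeration of a set not containing `0`. -/
lemma orderEmbOfFin_notmem_zero {S : Finset (Fin (N + 1))} (h0 : (0 : Fin (N + 1)) ∉ S) {k : ℕ}
    (hS : S.card = k) (hT : (pre S).card = k) :
    ∀ j : Fin k, S.orderEmbOfFin hS j = ((pre S).orderEmbOfFin hT j).succ := by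
  set f : Fin k → Fin (N + 1) := fun j => ((pre S).orderEmbOfFin hT j).succ with hf
  have hfs : ∀ x, f x ∈ S := fun x => mem_pre.mp ((pre S).orderEmbOfFin_mem hT x)
  have hmono : StrictMono f := fun x y hxy =>
    Fin.succ_lt_succ_iff.mpr (((pre S).orderEmbOfFin hT).strictMono hxy)
  have := Finset.orderEmbOfFin_unique hS hfs hmono
  intro j; rw [← congrFun this j]

lemma symm_zero_mem {S : Finset (Fin (N + 1))} (h0 : (0 : Fin (N + 1)) ∈ S) {k : ℕ}
    (hS : S.card = k + 1) (hT : (pre S).card = k) :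
    (S.orderIsoOfFin hS).symm ⟨0, h0⟩ = 0 := by
  rw [OrderIso.symm_apply_eq]
  apply Subtype.ext
  rw [Finset.coe_orderIsoOfFin_apply]
  exact ((orderEmbOfFin_mem_zero h0 hS hT).1).symm

lemma symm_succ_mem {S : Finset (Fin (N + 1))} (h0 : (0 : Fin (N + 1)) ∈ S) {k : ℕ}
    (hS : S.card = k + 1) (hT : (pre S).card = k) (j : Fin N) (hj : j.succ ∈ S) :
    (S.orderIsoOfFin hS).symm ⟨j.succ, hj⟩ =
      (((pre S).orderIsoOfFin hT).symm ⟨j, mem_pre.mpr hj⟩).succ := by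
  rw [OrderIso.symm_apply_eq]
  apply Subtype.ext
  rw [Finset.coe_orderIsoOfFin_apply]
  rw [(orderEmbOfFin_mem_zero h0 hS hT).2]
  have : (pre S).orderEmbOfFin hT (((pre S).orderIsoOfFin hT).symm ⟨j, mem_pre.mpr hj⟩) = j := by
    rw [← Finset.coe_orderIsoOfFin_apply, OrderIso.apply_symm_apply]
  rw [this]

lemma symm_succ_notmem {S : Finset (Fin (N + 1))} (h0 : (0 : Fin (N + 1)) ∉ S) {k : ℕ}
    (hS : S.card = k) (hT : (pre S).card = k) (j : Fin N) (hj : j.succ ∈ S) :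
    (S.orderIsoOfFin hS).symm ⟨j.succ, hj⟩ =
      ((pre S).orderIsoOfFin hT).symm ⟨j, mem_pre.mpr hj⟩ := by
  rw [OrderIso.symm_apply_eq]
  apply Subtype.ext
  rw [Finset.coe_orderIsoOfFin_apply]
  rw [orderEmbOfFin_notmem_zero h0 hS hT]
  have : (pre S).orderEmbOfFin hT (((pre S).orderIsoOfFin hT).symm ⟨j, mem_pre.mpr hj⟩) = j := by
    rw [← Finset.coe_orderIsoOfFin_apply, OrderIso.apply_symm_apply]
  rw [this]

lemma univ_symm {h : (Finset.univ : Finset (Fin N)).card = N} (m : Fin N)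
    (hm : m ∈ (Finset.univ : Finset (Fin N))) :
    ((Finset.univ : Finset (Fin N)).orderIsoOfFin h).symm ⟨m, hm⟩ = m := by
  rw [OrderIso.symm_apply_eq]
  apply Subtype.ext
  rw [Finset.coe_orderIsoOfFin_apply]
  have : (fun i : Fin N => i) = (Finset.univ : Finset (Fin N)).orderEmbOfFin h :=
    Finset.orderEmbOfFin_unique h (fun x => mem_univ x) strictMono_id
  exact congrFun this m

lemma orderIso_symm_congr {α : Type*} [LinearOrder α] {A B : Finset α} (h : A = B) {k : ℕ}
    (hA : A.card = k) (hB : B.card = k) (m : α) (hmA : m ∈ A) (hmB : m ∈ B) :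
    (A.orderIsoOfFin hA).symm ⟨m, hmA⟩ = (B.orderIsoOfFin hB).symm ⟨m, hmB⟩ := by
  subst h; rfl

/-- Generalized shuffle word with flexible total length. -/
noncomputable def sw {d N n₁ n₂ : ℕ} (u : Fin n₁ → Fin d) (v : Fin n₂ → Fin d)
    (S : Finset (Fin N)) (hS : S.card = n₁) (hS' : Sᶜ.card = n₂) (m : Fin N) : Fin d :=
  if hm : m ∈ S then u ((S.orderIsoOfFin hS).symm ⟨m, hm⟩)
  else v ((Sᶜ.orderIsoOfFin hS').symm ⟨m, Finset.mem_compl.mpr hm⟩)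

lemma sw_congr {d N n₁ n₂ : ℕ} (u : Fin n₁ → Fin d) (v : Fin n₂ → Fin d)
    {S₁ S₂ : Finset (Fin N)} (h : S₁ = S₂) (h₁ : S₁.card = n₁) (h₂ : S₂.card = n₁)
    (h₁' : S₁ᶜ.card = n₂) (h₂' : S₂ᶜ.card = n₂) :
    sw u v S₁ h₁ h₁' = sw u v S₂ h₂ h₂' := by subst h; rfl

lemma sw_zero_mem {d a n₂ : ℕ} (u : Fin (a + 1) → Fin d) (v : Fin n₂ → Fin d)
    {S : Finset (Fin (N + 1))} (h0 : (0 : Fin (N + 1)) ∈ S)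
    (hS : S.card = a + 1) (hS' : Sᶜ.card = n₂) :
    sw u v S hS hS' 0 = u 0 := by
  have hT : (pre S).card = a := by have := card_pre_mem h0; omega
  rw [sw, dif_pos h0, symm_zero_mem h0 hS hT]

lemma sw_zero_notmem {d n₁ b : ℕ} (u : Fin n₁ → Fin d) (v : Fin (b + 1) → Fin d)
    {S : Finset (Fin (N + 1))} (h0 : (0 : Fin (N + 1)) ∉ S)
    (hS : S.card = n₁) (hS' : Sᶜ.card = b + 1) :
    sw u v S hS hS' 0 = v 0 := by
  have h0c : (0 : Fin (N + 1)) ∈ Sᶜ := mem_compl.mpr h0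
  have hT : (pre Sᶜ).card = b := by have := card_pre_mem h0c; omega
  rw [sw, dif_neg h0, symm_zero_mem h0c hS' hT]

lemma sw_succ_mem {d a n₂ : ℕ} (u : Fin (a + 1) → Fin d) (v : Fin n₂ → Fin d)
    {S : Finset (Fin (N + 1))} (h0 : (0 : Fin (N + 1)) ∈ S)
    (hS : S.card = a + 1) (hS' : Sᶜ.card = n₂)
    (hT : (pre S).card = a) (hT' : (pre S)ᶜ.card = n₂) (j : Fin N) :
    sw u v S hS hS' j.succ = sw (fun i => u i.succ) v (pre S) hT hT' j := by
  by_cases hj : j.succ ∈ S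
  · rw [sw, dif_pos hj, sw, dif_pos (mem_pre.mpr hj), symm_succ_mem h0 hS hT j hj]
  · have hjc : j.succ ∈ Sᶜ := mem_compl.mpr hj
    have h0c : (0 : Fin (N + 1)) ∉ Sᶜ := by simp [h0]
    have hTc : (pre Sᶜ).card = n₂ := by rw [pre_compl]; exact hT'
    rw [sw, dif_neg hj, sw, dif_neg (fun h => hj (mem_pre.mp h))]
    rw [symm_succ_notmem h0c hS' hTc j hjc]
    exact congrArg v (orderIso_symm_congr (pre_compl S) hTc hT' j (mem_pre.mpr hjc)
      (by rw [← pre_compl]; exact mem_pre.mpr hjc))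

lemma sw_succ_notmem {d n₁ b : ℕ} (u : Fin n₁ → Fin d) (v : Fin (b + 1) → Fin d)
    {S : Finset (Fin (N + 1))} (h0 : (0 : Fin (N + 1)) ∉ S)
    (hS : S.card = n₁) (hS' : Sᶜ.card = b + 1)
    (hT : (pre S).card = n₁) (hT' : (pre S)ᶜ.card = b) (j : Fin N) :
    sw u v S hS hS' j.succ = sw u (fun i => v i.succ) (pre S) hT hT' j := by
  by_cases hj : j.succ ∈ S
  · rw [sw, dif_pos hj, sw, dif_pos (mem_pre.mpr hj), symm_succ_notmem h0 hS hT j hj]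
  · have hjc : j.succ ∈ Sᶜ := mem_compl.mpr hj
    have h0c : (0 : Fin (N + 1)) ∈ Sᶜ := mem_compl.mpr h0
    have hTc : (pre Sᶜ).card = b := by rw [pre_compl]; exact hT'
    rw [sw, dif_neg hj, sw, dif_neg (fun h => hj (mem_pre.mp h))]
    rw [symm_succ_mem h0c hS' hTc j hjc]
    exact congrArg (fun k => v (Fin.succ k)) (orderIso_symm_congr (pre_compl S) hTc hT' j
      (mem_pre.mpr hjc) (by rw [← pre_compl]; exact mem_pre.mpr hjc))


/-- Insert `0` after shifting: sends `T ⊆ Fin N` to `{0} ∪ succ(T) ⊆ Fin (N+1)`. -/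
def insMap {k : ℕ} (T : {T : Finset (Fin N) // T.card = k}) :
    {S : Finset (Fin (N + 1)) // S.card = k + 1} :=
  ⟨insert 0 (T.1.map succE),
    by rw [Finset.card_insert_of_notMem (zero_not_mem_map _), Finset.card_map, T.2]⟩

/-- Shift: sends `T ⊆ Fin N` to `succ(T) ⊆ Fin (N+1)`. -/
def mapMap {k : ℕ} (T : {T : Finset (Fin N) // T.card = k}) :
    {S : Finset (Fin (N + 1)) // S.card = k} :=
  ⟨T.1.map succE, by rw [Finset.card_map, T.2]⟩

lemma insMap_coe {k : ℕ} (T : {T : Finset (Fin N) // T.card = k}) :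
    (insMap T).1 = insert 0 (T.1.map succE) := rfl

lemma mapMap_coe {k : ℕ} (T : {T : Finset (Fin N) // T.card = k}) :
    (mapMap T).1 = T.1.map succE := rfl

lemma sumElim_bijective {k : ℕ} :
    Function.Bijective
      (Sum.elim (insMap (N := N) (k := k)) (mapMap (N := N) (k := k + 1))) := by
  constructor
  · rintro (T₁ | T₁) (T₂ | T₂) h <;> simp only [Sum.elim_inl, Sum.elim_inr] at h
    · have hv := congrArg (fun S : {S : Finset (Fin (N + 1)) // S.card = k + 1} => pre S.1) h
      simp only [insMap_coe, pre_insert_map] at hv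
      exact congrArg Sum.inl (Subtype.ext hv)
    · have hv := congrArg Subtype.val h
      simp only [insMap_coe, mapMap_coe] at hv
      exact absurd (hv ▸ Finset.mem_insert_self 0 (T₁.1.map succE)) (zero_not_mem_map T₂.1)
    · have hv := congrArg Subtype.val h
      simp only [insMap_coe, mapMap_coe] at hv
      exact absurd (hv.symm ▸ Finset.mem_insert_self 0 (T₂.1.map succE)) (zero_not_mem_map T₁.1)
    · have hv := congrArg (fun S : {S : Finset (Fin (N + 1)) // S.card = k + 1} => pre S.1) h
      simp only [mapMap_coe, pre_map] at hv
      exact congrArg Sum.inr (Subtype.ext hv)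
  · intro S
    by_cases h0 : (0 : Fin (N + 1)) ∈ S.1
    · refine ⟨Sum.inl ⟨pre S.1, ?_⟩, ?_⟩
      · have h1 := card_pre_mem h0
        have h2 := S.2
        omega
      · simp only [Sum.elim_inl]
        exact Subtype.ext (by rw [insMap_coe]; exact (eq_insert h0).symm)
    · refine ⟨Sum.inr ⟨pre S.1, ?_⟩, ?_⟩
      · rw [card_pre_notmem h0, S.2]
      · simp only [Sum.elim_inr]
        exact Subtype.ext (by rw [mapMap_coe]; exact (eq_map h0).symm)

end ShuffleAux

section Analysis

open ShuffleAux intervalIntegral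

variable {d : ℕ} (Γ : ℝ → Fin d → ℝ)

lemma canoLift_succ_def (n : ℕ) (w : Fin (n + 1) → Fin d) (t s : ℝ) :
    canoLift Γ (n + 1) w t s =
      ∫ x in s..t, deriv (fun y => Γ y (w 0)) x * canoLift Γ n (fun j => w j.succ) x s := by
  rw [canoLift]

lemma canoLift_zero_def (w : Fin 0 → Fin d) (t s : ℝ) : canoLift Γ 0 w t s = 1 := by
  rw [canoLift]

lemma canoLift_continuous (hg : ∀ i, Continuous (deriv fun y => Γ y i)) (s : ℝ) :
    ∀ (n : ℕ) (w : Fin n → Fin d), Continuous (fun t => canoLift Γ n w t s) := by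
  intro n
  induction n with
  | zero => intro w; simp only [canoLift_zero_def]; exact continuous_const
  | succ m ih =>
      intro w
      have hc : Continuous
          (fun x => deriv (fun y => Γ y (w 0)) x * canoLift Γ m (fun j => w j.succ) x s) :=
        (hg _).mul (ih _)
      have := intervalIntegral.continuous_primitive (μ := MeasureTheory.volume)
        (fun a b => hc.intervalIntegrable a b) s
      simpa only [canoLift_succ_def] using this

lemma canoLift_hasDerivAt (hg : ∀ i, Continuous (deriv fun y => Γ y i)) (s : ℝ)
    (n : ℕ) (w : Fin (n + 1) → Fin d) (t₀ : ℝ) :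
    HasDerivAt (fun t => canoLift Γ (n + 1) w t s)
      (deriv (fun y => Γ y (w 0)) t₀ * canoLift Γ n (fun j => w j.succ) t₀ s) t₀ := by
  have hc : Continuous
      (fun x => deriv (fun y => Γ y (w 0)) x * canoLift Γ n (fun j => w j.succ) x s) :=
    (hg _).mul (canoLift_continuous Γ hg s n _)
  have := (hc.integral_hasStrictDerivAt s t₀).hasDerivAt
  simpa only [canoLift_succ_def] using this

lemma canoLift_self (n : ℕ) (w : Fin (n + 1) → Fin d) (s : ℝ) :
    canoLift Γ (n + 1) w s s = 0 := by
  rw [canoLift_succ_def, intervalIntegral.integral_same]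

end Analysis

section Key

open ShuffleAux Finset

lemma canoLift_key {d : ℕ} (Γ : ℝ → Fin d → ℝ)
    (hg : ∀ i, Continuous (deriv fun y => Γ y i)) (s : ℝ) :
    ∀ (N n₁ n₂ : ℕ) (hN : n₁ + n₂ = N) (u : Fin n₁ → Fin d) (v : Fin n₂ → Fin d) (t : ℝ),
    canoLift Γ n₁ u t s * canoLift Γ n₂ v t s =
      ∑ S : {S : Finset (Fin N) // S.card = n₁},
        canoLift Γ N (sw u v S.1 S.2
          (by rw [Finset.card_compl, S.2, Fintype.card_fin]; omega)) t s := by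
  intro N
  induction N with
  | zero =>
      intro n₁ n₂ hN u v t
      obtain rfl : n₁ = 0 := by omega
      obtain rfl : n₂ = 0 := by omega
      rw [Fintype.sum_eq_single (⟨∅, Finset.card_empty⟩ : {S : Finset (Fin 0) // S.card = 0})
        (fun b hb => absurd (Subtype.ext (Finset.card_eq_zero.mp b.2)) hb)]
      simp [canoLift_zero_def]
  | succ M ih =>
      intro n₁ n₂ hN u v t
      match n₁, hN with
      | 0, hN =>
        obtain rfl : n₂ = M + 1 := by omega
        rw [Fintype.sum_eq_single (⟨∅, Finset.card_empty⟩ :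
              {S : Finset (Fin (M + 1)) // S.card = 0})
          (fun b hb => absurd (Subtype.ext (Finset.card_eq_zero.mp b.2)) hb)]
        rw [canoLift_zero_def, one_mul]
        congr 1
        funext m
        rw [sw, dif_neg (Finset.notMem_empty m)]
        have huniv : (Finset.univ : Finset (Fin (M + 1))).card = M + 1 := by simp
        rw [orderIso_symm_congr (Finset.compl_empty) _ huniv m
          (Finset.mem_compl.mpr (Finset.notMem_empty m)) (Finset.mem_univ m),
          univ_symm m (Finset.mem_univ m)]
      | (a+1), hN =>
        match n₂, hN with
        | 0, hN =>
          obtain rfl : a = M := by omega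
          rw [Fintype.sum_eq_single (⟨Finset.univ, by simp⟩ :
                {S : Finset (Fin (a + 1)) // S.card = a + 1})
            (fun b hb => absurd (Subtype.ext
              ((Finset.card_eq_iff_eq_univ _).mp (by rw [b.2, Fintype.card_fin]))) hb)]
          rw [canoLift_zero_def, mul_one]
          congr 1
          funext m
          rw [sw, dif_pos (Finset.mem_univ m), univ_symm m (Finset.mem_univ m)]
        | (b+1), hN =>
          have hparts := intervalIntegral.integral_deriv_mul_eq_sub
            (fun x _ => canoLift_hasDerivAt Γ hg s a u x)
            (fun x _ => canoLift_hasDerivAt Γ hg s b v x)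
            (((hg _).mul (canoLift_continuous Γ hg s a
              (fun j => u j.succ))).intervalIntegrable s t)
            (((hg _).mul (canoLift_continuous Γ hg s b
              (fun j => v j.succ))).intervalIntegrable s t)
          simp only [canoLift_self, zero_mul, sub_zero] at hparts
          have hpt : ∀ x : ℝ,
              deriv (fun y => Γ y (u 0)) x * canoLift Γ a (fun j => u j.succ) x s *
                  canoLift Γ (b + 1) v x s +
                canoLift Γ (a + 1) u x s *
                  (deriv (fun y => Γ y (v 0)) x * canoLift Γ b (fun j => v j.succ) x s) =
              ∑ S : {S : Finset (Fin (M + 1)) // S.card = a + 1},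
                deriv (fun y => Γ y (sw u v S.1 S.2
                    (by rw [Finset.card_compl, S.2, Fintype.card_fin]; omega) 0)) x *
                  canoLift Γ M (fun j => sw u v S.1 S.2
                    (by rw [Finset.card_compl, S.2, Fintype.card_fin]; omega) j.succ) x s := by
            intro x
            calc deriv (fun y => Γ y (u 0)) x * canoLift Γ a (fun j => u j.succ) x s *
                  canoLift Γ (b + 1) v x s +
                canoLift Γ (a + 1) u x s *
                  (deriv (fun y => Γ y (v 0)) x * canoLift Γ b (fun j => v j.succ) x s)
                = deriv (fun y => Γ y (u 0)) x *
                    (canoLift Γ a (fun j => u j.succ) x s * canoLift Γ (b + 1) v x s) +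
                  deriv (fun y => Γ y (v 0)) x *
                    (canoLift Γ (a + 1) u x s * canoLift Γ b (fun j => v j.succ) x s) := by
                  ring
              _ = _ := by
                  rw [ih a (b + 1) (by omega) (fun j => u j.succ) v x,
                    ih (a + 1) b (by omega) u (fun j => v j.succ) x,
                    Finset.mul_sum, Finset.mul_sum]
                  refine ((Fintype.sum_sum_type (Sum.elim
                      (fun T : {T : Finset (Fin M) // T.card = a} =>
                        deriv (fun y => Γ y (u 0)) x *
                          canoLift Γ M (sw (fun j => u j.succ) v T.1 T.2
                            (by rw [Finset.card_compl, T.2, Fintype.card_fin]; omega)) x s)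
                      (fun T : {T : Finset (Fin M) // T.card = a + 1} =>
                        deriv (fun y => Γ y (v 0)) x *
                          canoLift Γ M (sw u (fun j => v j.succ) T.1 T.2
                            (by rw [Finset.card_compl, T.2, Fintype.card_fin]; omega)) x s))).symm.trans
                    (Fintype.sum_bijective (Sum.elim insMap mapMap) sumElim_bijective _ _ ?_))
                  rintro (T | T) <;>
                    simp only [Sum.elim_inl, Sum.elim_inr, insMap_coe, mapMap_coe]
                  · have h0 : (0 : Fin (M + 1)) ∈ insert (0 : Fin (M + 1)) (T.1.map succE) :=
                      Finset.mem_insert_self _ _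
                    have hpre : pre (insert (0 : Fin (M + 1)) (T.1.map succE)) = T.1 :=
                      pre_insert_map T.1
                    have hT : (pre (insert (0 : Fin (M + 1)) (T.1.map succE))).card = a := by
                      rw [hpre, T.2]
                    have hT' : (pre (insert (0 : Fin (M + 1)) (T.1.map succE)))ᶜ.card = b + 1 := by
                      rw [hpre, Finset.card_compl, T.2, Fintype.card_fin]; omega
                    rw [sw_zero_mem u v h0]
                    congr 1
                    congr 1
                    funext j
                    rw [sw_succ_mem u v h0 _ _ hT hT' j]
                    exact congrFun (sw_congr _ _ hpre.symm T.2 hT _ hT') j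
                  · have h0 : (0 : Fin (M + 1)) ∉ T.1.map succE := zero_not_mem_map T.1
                    have hpre : pre (T.1.map (succE (N := M))) = T.1 := pre_map T.1
                    have hT : (pre (T.1.map (succE (N := M)))).card = a + 1 := by
                      rw [hpre, T.2]
                    have hT' : (pre (T.1.map (succE (N := M))))ᶜ.card = b := by
                      rw [hpre, Finset.card_compl, T.2, Fintype.card_fin]; omega
                    rw [sw_zero_notmem u v h0]
                    congr 1
                    congr 1
                    funext j
                    rw [sw_succ_notmem u v h0 _ _ hT hT' j]
                    exact congrFun (sw_congr _ _ hpre.symm T.2 hT _ hT') j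
          rw [← hparts]
          simp only [canoLift_succ_def Γ M]
          rw [← intervalIntegral.integral_finset_sum
            (fun S _ => (show Continuous (fun x => deriv (fun y => Γ y _) x * canoLift Γ M _ x s) from
              (hg _).mul (canoLift_continuous Γ hg s M _)).intervalIntegrable s t)]
          exact intervalIntegral.integral_congr fun x _ => hpt x

end Key

/-- The canonical lift of a continuously differentiable path satisfies the
geometric (shuffle) property. -/
theorem canonical_lift_shuffle (d : ℕ) (Γ : ℝ → Fin d → ℝ) (hΓ : ContDiff ℝ 1 Γ)
    (n₁ n₂ : ℕ) (h₁ : 1 ≤ n₁) (h₂ : 1 ≤ n₂)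
    (u : Fin n₁ → Fin d) (v : Fin n₂ → Fin d) (s t : ℝ) :
    canoLift Γ n₁ u t s * canoLift Γ n₂ v t s =
      ∑ S : {S : Finset (Fin (n₁ + n₂)) // S.card = n₁},
        canoLift Γ (n₁ + n₂) (shuffleWord u v S.1 S.2) t s := by
  have hg : ∀ i : Fin d, Continuous (deriv fun y => Γ y i) := by
    intro i
    exact (contDiff_pi.mp hΓ i).continuous_deriv le_rfl
  exact canoLift_key Γ hg s (n₁ + n₂) n₁ n₂ rfl u v t
end

section
/- Tree Chen property: let F be a decorated rooted forest on n vertices with decoration ℓ valued in {1,…,d}, and let Γ : ℝ → ℝ^d be continuously differentiable. Then for all s, u, t ∈ ℝ, I_F(Γ)_{ts} − I_F(Γ)_{tu} − I_F(Γ)_{us} = Σ_c I_{Roo_c F}(Γ)_{tu} · I_{Lea_c F}(Γ)_{us}, the sum running over all admissible cuts c of F. -/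
/-- `w` is a strict descendant of `v` in the forest with parent map `p`. -/
def descends (p : ℕ → ℕ) (w v : ℕ) : Prop := ∃ k : ℕ, 0 < k ∧ p^[k] w = v

/-- Nested iterated integral over the forest with vertex set `V` and parent map `p`,
each vertex `v` carrying an integrand `f v`; vertices whose parent lies outside `V` are
roots and are integrated from `s` to `t`, the others from `s` to the parent's variable.
The innermost (i.e. maximal) vertices are integrated out first. -/
noncomputable def forestIntAux (s : ℝ) (p : ℕ → ℕ) (V : Finset ℕ) (f : ℕ → ℝ → ℝ) (t : ℝ) : ℝ :=
  if hV : V.Nonempty then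
    if p (V.max' hV) ∈ V.erase (V.max' hV) then
      forestIntAux s p (V.erase (V.max' hV))
        (Function.update f (p (V.max' hV))
          fun x => f (p (V.max' hV)) x * ∫ y in s..x, f (V.max' hV) y) t
    else (∫ y in s..t, f (V.max' hV) y) * forestIntAux s p (V.erase (V.max' hV)) f t
  else 1
termination_by V.card
decreasing_by
  all_goals exact Finset.card_erase_lt_of_mem (V.max'_mem hV)

/-- The iterated integral of a path `Γ` over the decorated forest with vertex set `V`,
parent map `p` and decoration `ℓ`. -/
noncomputable def forestIntegral {d : ℕ} (Γ : ℝ → Fin d → ℝ) (ℓ : ℕ → Fin d) (p : ℕ → ℕ)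
    (V : Finset ℕ) (t s : ℝ) : ℝ :=
  forestIntAux s p V (fun v x => deriv (fun y => Γ y (ℓ v)) x) t

/-- The leaves part `Lea_c F`: vertices lying in the cut `c` or descending from it. -/
noncomputable def leaPart (n : ℕ) (p : ℕ → ℕ) (c : Finset ℕ) : Finset ℕ :=
  letI := Classical.decPred fun w => w ∈ c ∨ ∃ v ∈ c, descends p w v
  (Finset.Icc 1 n).filter fun w => w ∈ c ∨ ∃ v ∈ c, descends p w v

/-- The root part `Roo_c F`: the remaining vertices. -/
noncomputable def rooPart (n : ℕ) (p : ℕ → ℕ) (c : Finset ℕ) : Finset ℕ :=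
  Finset.Icc 1 n \ leaPart n p c

/-- An admissible cut of the forest on `{1,…,n}` with parent map `p`: an antichain of
vertices (for the descendant relation), excluding the empty cut and the cut consisting of
all the roots. -/
def IsAdmissibleCut (n : ℕ) (p : ℕ → ℕ) (c : Finset ℕ) : Prop :=
  c ⊆ Finset.Icc 1 n ∧ (∀ v ∈ c, ∀ w ∈ c, ¬ descends p w v) ∧
    c.Nonempty ∧ c ≠ (Finset.Icc 1 n).filter fun v => p v = 0

noncomputable def admissibleCuts (n : ℕ) (p : ℕ → ℕ) : Finset (Finset ℕ) :=
  letI := Classical.decPred (IsAdmissibleCut n p)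
  (Finset.Icc 1 n).powerset.filter (IsAdmissibleCut n p)

section TreeChenAux

open Finset intervalIntegral

lemma forestIntAux_unfold_leaf {s : ℝ} {p : ℕ → ℕ} {V : Finset ℕ} {f : ℕ → ℝ → ℝ} {t : ℝ}
    (hV : V.Nonempty) (hin : p (V.max' hV) ∈ V.erase (V.max' hV)) :
    forestIntAux s p V f t = forestIntAux s p (V.erase (V.max' hV))
      (Function.update f (p (V.max' hV))
        fun x => f (p (V.max' hV)) x * ∫ y in s..x, f (V.max' hV) y) t := by
  rw [forestIntAux, dif_pos hV, if_pos hin]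

lemma forestIntAux_unfold_root {s : ℝ} {p : ℕ → ℕ} {V : Finset ℕ} {f : ℕ → ℝ → ℝ} {t : ℝ}
    (hV : V.Nonempty) (hout : p (V.max' hV) ∉ V.erase (V.max' hV)) :
    forestIntAux s p V f t =
      (∫ y in s..t, f (V.max' hV) y) * forestIntAux s p (V.erase (V.max' hV)) f t := by
  rw [forestIntAux, dif_pos hV, if_neg hout]

lemma forestIntAux_congr (s : ℝ) (p : ℕ → ℕ) (t : ℝ) :
    ∀ (V : Finset ℕ) (f f' : ℕ → ℝ → ℝ), (∀ v ∈ V, f v = f' v) →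
      forestIntAux s p V f t = forestIntAux s p V f' t := by
  intro V
  induction V using Finset.strongInduction with
  | _ V ih =>
    intro f f' h
    by_cases hV : V.Nonempty
    · by_cases hp : p (V.max' hV) ∈ V.erase (V.max' hV)
      · rw [forestIntAux_unfold_leaf hV hp, forestIntAux_unfold_leaf hV hp]
        apply ih _ (Finset.erase_ssubset (V.max'_mem hV))
        intro v hv
        rcases eq_or_ne v (p (V.max' hV)) with rfl|hne
        · rw [Function.update_self, Function.update_self,
            h _ (Finset.mem_of_mem_erase hp), h _ (V.max'_mem hV)]
        · rw [Function.update_of_ne hne, Function.update_of_ne hne]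
          exact h v (Finset.mem_of_mem_erase hv)
      · rw [forestIntAux_unfold_root hV hp, forestIntAux_unfold_root hV hp,
          h _ (V.max'_mem hV)]
        congr 1
        exact ih _ (Finset.erase_ssubset (V.max'_mem hV)) _ _
          fun v hv => h v (Finset.mem_of_mem_erase hv)
    · rw [forestIntAux, forestIntAux, dif_neg hV, dif_neg hV]

lemma cont_primitive {g : ℝ → ℝ} (hg : Continuous g) (s : ℝ) :
    Continuous fun x => ∫ y in s..x, g y :=
  intervalIntegral.continuous_primitive (fun _ _ => hg.intervalIntegrable _ _) s

lemma cont_update {f : ℕ → ℝ → ℝ} (hf : ∀ w, Continuous (f w)) {v : ℕ} {g : ℝ → ℝ}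
    (hg : Continuous g) : ∀ w, Continuous (Function.update f v g w) := by
  intro w
  rcases eq_or_ne w v with rfl|hne
  · rwa [Function.update_self]
  · rw [Function.update_of_ne hne]; exact hf w

lemma forestIntAux_linear (s : ℝ) (p : ℕ → ℕ) (t : ℝ) :
    ∀ (V : Finset ℕ) (f : ℕ → ℝ → ℝ) (v : ℕ) (a : ℝ) (g h : ℝ → ℝ),
      (∀ w, Continuous (f w)) → Continuous g → Continuous h → v ∈ V →
      forestIntAux s p V (Function.update f v (fun x => a * g x + h x)) t
        = a * forestIntAux s p V (Function.update f v g) t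
          + forestIntAux s p V (Function.update f v h) t := by
  intro V
  induction V using Finset.strongInduction with
  | _ V ih =>
    intro f v a g h hf hg hh hv
    have hV : V.Nonempty := ⟨v, hv⟩
    set m := V.max' hV with hmdef
    have hmV : m ∈ V := V.max'_mem hV
    have hss : V.erase m ⊂ V := Finset.erase_ssubset hmV
    rcases eq_or_ne v m with rfl|hvm
    · ---- v = m is the max
      by_cases hp : p m ∈ V.erase m
      · have hne : p m ≠ m := Finset.ne_of_mem_erase hp
        rw [forestIntAux_unfold_leaf hV hp, forestIntAux_unfold_leaf (f := Function.update f m g) hV hp,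
          forestIntAux_unfold_leaf (f := Function.update f m h) hV hp]
        simp only [← hmdef, Function.update_self, Function.update_of_ne hne]
        have key : ∀ k : ℝ → ℝ,
            forestIntAux s p (V.erase m)
              (Function.update (Function.update f m k) (p m)
                fun x => f (p m) x * ∫ y in s..x, k y) t
            = forestIntAux s p (V.erase m)
              (Function.update f (p m) fun x => f (p m) x * ∫ y in s..x, k y) t := by
          intro k
          apply forestIntAux_congr
          intro w hw
          rcases eq_or_ne w (p m) with rfl|hw2
          · rw [Function.update_self, Function.update_self]
          · rw [Function.update_of_ne hw2, Function.update_of_ne hw2,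
              Function.update_of_ne (Finset.ne_of_mem_erase hw)]
        rw [key, key, key]
        have e1 : (fun x => f (p m) x * ∫ y in s..x, a * g y + h y)
            = fun x => a * (f (p m) x * ∫ y in s..x, g y)
                + (f (p m) x * ∫ y in s..x, h y) := by
          funext x
          rw [intervalIntegral.integral_add (f := fun y => a * g y) (g := h) ((continuous_const.mul hg).intervalIntegrable _ _)
            (hh.intervalIntegrable _ _), intervalIntegral.integral_const_mul]
          ring
        rw [e1]
        exact ih _ hss f (p m) a _ _ hf
          ((hf (p m)).mul (cont_primitive hg s)) ((hf (p m)).mul (cont_primitive hh s))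
          hp
      · rw [forestIntAux_unfold_root hV hp, forestIntAux_unfold_root (f := Function.update f m g) hV hp,
          forestIntAux_unfold_root (f := Function.update f m h) hV hp]
        simp only [← hmdef, Function.update_self]
        have key : ∀ k : ℝ → ℝ,
            forestIntAux s p (V.erase m) (Function.update f m k) t
            = forestIntAux s p (V.erase m) f t := by
          intro k
          apply forestIntAux_congr
          intro w hw
          rw [Function.update_of_ne (Finset.ne_of_mem_erase hw)]
        rw [key, key, key,
          intervalIntegral.integral_add (f := fun y => a * g y) (g := h) ((continuous_const.mul hg).intervalIntegrable _ _)
            (hh.intervalIntegrable _ _), intervalIntegral.integral_const_mul]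
        ring
    · -- v is not the max
      have hvE : v ∈ V.erase m := Finset.mem_erase.mpr ⟨hvm, hv⟩
      have hmup : ∀ k : ℝ → ℝ, Function.update f v k m = f m :=
        fun k => Function.update_of_ne (fun hc => hvm hc.symm) _ _
      by_cases hp : p m ∈ V.erase m
      · rcases eq_or_ne (p m) v with hpv|hpv
        · -- parent of max is v itself
          rw [forestIntAux_unfold_leaf hV hp, forestIntAux_unfold_leaf (f := Function.update f v g) hV hp,
            forestIntAux_unfold_leaf (f := Function.update f v h) hV hp]
          simp only [← hmdef, hpv, Function.update_self, hmup, Function.update_idem]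
          have e1 : (fun x => (a * g x + h x) * ∫ y in s..x, f m y)
              = fun x => a * (g x * ∫ y in s..x, f m y) + (h x * ∫ y in s..x, f m y) := by
            funext x; ring
          rw [e1]
          exact ih _ hss f v a _ _ hf
            (hg.mul (cont_primitive (hf m) s)) (hh.mul (cont_primitive (hf m) s)) hvE
        · -- parent of max is another vertex
          rw [forestIntAux_unfold_leaf hV hp, forestIntAux_unfold_leaf (f := Function.update f v g) hV hp,
            forestIntAux_unfold_leaf (f := Function.update f v h) hV hp]
          simp only [← hmdef, hmup, Function.update_of_ne hpv]
          rw [Function.update_comm hpv.symm, Function.update_comm hpv.symm,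
            Function.update_comm hpv.symm]
          exact ih _ hss _ v a g h
            (cont_update hf ((hf (p m)).mul (cont_primitive (hf m) s))) hg hh hvE
      · rw [forestIntAux_unfold_root hV hp, forestIntAux_unfold_root (f := Function.update f v g) hV hp,
          forestIntAux_unfold_root (f := Function.update f v h) hV hp]
        simp only [← hmdef, hmup]
        rw [ih _ hss f v a g h hf hg hh hvE]
        ring

lemma forestIntAux_empty (s : ℝ) (p : ℕ → ℕ) (f : ℕ → ℝ → ℝ) (t : ℝ) :
    forestIntAux s p ∅ f t = 1 := by
  rw [forestIntAux]; simp

lemma max'_insert_eq {v : ℕ} {W : Finset ℕ} (hmax : ∀ w ∈ W, w ≤ v) :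
    (insert v W).max' (insert_nonempty v W) = v := by
  apply le_antisymm
  · exact Finset.max'_le _ _ _ (by simp +contextual [hmax])
  · exact Finset.le_max' _ _ (mem_insert_self v W)

lemma forestIntAux_insert_root (s : ℝ) (p : ℕ → ℕ) (f : ℕ → ℝ → ℝ) (t : ℝ)
    {v : ℕ} {W : Finset ℕ} (hv : v ∉ W) (hmax : ∀ w ∈ W, w ≤ v) (hout : p v ∉ W) :
    forestIntAux s p (insert v W) f t = (∫ y in s..t, f v y) * forestIntAux s p W f t := by
  rw [forestIntAux]
  have h1 : (insert v W).max' (insert_nonempty v W) = v := max'_insert_eq hmax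
  have h2 : (insert v W).erase v = W := Finset.erase_insert hv
  rw [dif_pos (insert_nonempty v W)]
  simp only [h1, h2]
  rw [if_neg (by simpa [h2] using hout)]

lemma forestIntAux_insert_leaf (s : ℝ) (p : ℕ → ℕ) (f : ℕ → ℝ → ℝ) (t : ℝ)
    {v : ℕ} {W : Finset ℕ} (hv : v ∉ W) (hmax : ∀ w ∈ W, w ≤ v) (hin : p v ∈ W) :
    forestIntAux s p (insert v W) f t =
      forestIntAux s p W
        (Function.update f (p v) fun x => f (p v) x * ∫ y in s..x, f v y) t := by
  rw [forestIntAux]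
  have h1 : (insert v W).max' (insert_nonempty v W) = v := max'_insert_eq hmax
  have h2 : (insert v W).erase v = W := Finset.erase_insert hv
  rw [dif_pos (insert_nonempty v W)]
  simp only [h1, h2]
  rw [if_pos hin]


section Comb
variable {p : ℕ → ℕ} {n : ℕ}

lemma descends_cons {w v : ℕ} : descends p w v ↔ p w = v ∨ descends p (p w) v := by
  constructor
  · rintro ⟨k, hk, hkv⟩
    rcases Nat.exists_eq_succ_of_ne_zero (Nat.pos_iff_ne_zero.mp hk) with ⟨j, rfl⟩
    rcases Nat.eq_zero_or_pos j with rfl | hj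
    · left; simpa using hkv
    · right; exact ⟨j, hj, by rwa [Function.iterate_succ_apply] at hkv⟩
  · rintro (h | ⟨k, hk, hkv⟩)
    · exact ⟨1, one_pos, by simpa using h⟩
    · exact ⟨k + 1, Nat.succ_pos k, by rwa [Function.iterate_succ_apply]⟩

variable (hp : ∀ v, 1 ≤ v → v ≤ n → p v < v) (hp0 : p 0 = 0)
include hp hp0

lemma iterate_lt {w k : ℕ} (hw1 : 1 ≤ w) (hwn : w ≤ n) (hk : 0 < k) : p^[k] w < w := by
  induction k with
  | zero => omega
  | succ k ih =>
    rcases Nat.eq_zero_or_pos k with rfl | hk'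
    · simpa using hp w hw1 hwn
    · have h1 : p^[k] w < w := ih hk'
      rw [Function.iterate_succ_apply']
      rcases Nat.eq_zero_or_pos (p^[k] w) with h0 | h1'
      · rw [h0, hp0]; omega
      · exact lt_trans (hp _ h1' (by omega)) h1

lemma descends_lt {w v : ℕ} (hw1 : 1 ≤ w) (hwn : w ≤ n) (h : descends p w v) : v < w := by
  rcases h with ⟨k, hk, rfl⟩
  exact iterate_lt hp hp0 hw1 hwn hk

lemma descends_zero {w v : ℕ} (hw : p w = 0) (h : descends p w v) : v = 0 := by
  rcases h with ⟨k, hk, rfl⟩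
  rcases Nat.exists_eq_succ_of_ne_zero (Nat.pos_iff_ne_zero.mp hk) with ⟨j, rfl⟩
  rw [Function.iterate_succ_apply, hw, Function.iterate_fixed hp0]

/-- every vertex is a root or descends from a root -/
lemma exists_root : ∀ w, 1 ≤ w → w ≤ n → ∃ r, 1 ≤ r ∧ r ≤ n ∧ p r = 0 ∧
    (r = w ∨ descends p w r) := by
  intro w
  induction w using Nat.strong_induction_on with
  | _ w ih =>
    intro hw1 hwn
    rcases Nat.eq_zero_or_pos (p w) with h0 | h1
    · exact ⟨w, hw1, hwn, h0, Or.inl rfl⟩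
    · have hlt : p w < w := hp w hw1 hwn
      obtain ⟨r, hr1, hrn, hr0, hr⟩ := ih (p w) hlt h1 (by omega)
      refine ⟨r, hr1, hrn, hr0, Or.inr ?_⟩
      rcases hr with rfl | hd
      · exact descends_cons.mpr (Or.inl rfl)
      · exact descends_cons.mpr (Or.inr hd)

end Comb

lemma mem_leaPart {n : ℕ} {p : ℕ → ℕ} {c : Finset ℕ} {w : ℕ} :
    w ∈ leaPart n p c ↔ (1 ≤ w ∧ w ≤ n) ∧ (w ∈ c ∨ ∃ v ∈ c, descends p w v) := by
  simp [leaPart, Finset.mem_filter, Finset.mem_Icc, and_assoc]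

lemma mem_rooPart {n : ℕ} {p : ℕ → ℕ} {c : Finset ℕ} {w : ℕ} :
    w ∈ rooPart n p c ↔ (1 ≤ w ∧ w ≤ n) ∧ ¬(w ∈ c ∨ ∃ v ∈ c, descends p w v) := by
  simp only [rooPart, Finset.mem_sdiff, mem_leaPart, Finset.mem_Icc]
  constructor
  · rintro ⟨⟨h1, h2⟩, h3⟩
    exact ⟨⟨h1, h2⟩, fun hx => h3 ⟨⟨h1, h2⟩, hx⟩⟩
  · rintro ⟨⟨h1, h2⟩, h3⟩
    exact ⟨⟨h1, h2⟩, fun hx => h3 hx.2⟩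

section SetIds
variable {p : ℕ → ℕ} {n : ℕ} {c : Finset ℕ}
variable (hp : ∀ v, 1 ≤ v → v ≤ n + 1 → p v < v) (hp0 : p 0 = 0)

lemma lea_succ_not (h : ¬(n + 1 ∈ c ∨ ∃ v ∈ c, descends p (n + 1) v)) :
    leaPart (n + 1) p c = leaPart n p c := by
  ext w
  simp only [mem_leaPart]
  constructor
  · rintro ⟨⟨h1, h2⟩, h3⟩
    rcases Nat.lt_or_ge w (n + 1) with hw | hw
    · exact ⟨⟨h1, by omega⟩, h3⟩
    · have hw' : w = n + 1 := by omega
      subst hw'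
      exact absurd h3 h
  · rintro ⟨⟨h1, h2⟩, h3⟩
    exact ⟨⟨h1, by omega⟩, h3⟩

include hp hp0

lemma lea_succ_mem (hc : c ⊆ Finset.Icc 1 n)
    (h : n + 1 ∈ c ∨ ∃ v ∈ c, descends p (n + 1) v) :
    leaPart (n + 1) p c = insert (n + 1) (leaPart n p c) := by
  ext w
  simp only [mem_leaPart, Finset.mem_insert]
  constructor
  · rintro ⟨⟨h1, h2⟩, h3⟩
    rcases Nat.lt_or_ge w (n + 1) with hw | hw
    · exact Or.inr ⟨⟨h1, by omega⟩, h3⟩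
    · left; omega
  · rintro (rfl | ⟨⟨h1, h2⟩, h3⟩)
    · exact ⟨⟨by omega, le_refl _⟩, h⟩
    · exact ⟨⟨h1, by omega⟩, h3⟩

/-- the leaves part of `insert (n+1) c` -/
lemma lea_insert_succ (hc : c ⊆ Finset.Icc 1 n) :
    leaPart (n + 1) p (insert (n + 1) c) = insert (n + 1) (leaPart n p c) := by
  ext w
  simp only [mem_leaPart, Finset.mem_insert]
  constructor
  · rintro ⟨⟨h1, h2⟩, h3⟩
    rcases Nat.lt_or_ge w (n + 1) with hw | hw
    · refine Or.inr ⟨⟨h1, by omega⟩, ?_⟩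
      rcases h3 with (rfl | hwc) | ⟨v, (rfl | hvc), hd⟩
      · omega
      · exact Or.inl hwc
      · exact absurd (descends_lt hp hp0 h1 (by omega) hd) (by omega)
      · exact Or.inr ⟨v, hvc, hd⟩
    · left; omega
  · rintro (rfl | ⟨⟨h1, h2⟩, h3⟩)
    · exact ⟨⟨by omega, le_refl _⟩, Or.inl (Or.inl rfl)⟩
    · refine ⟨⟨h1, by omega⟩, ?_⟩
      rcases h3 with hwc | ⟨v, hvc, hd⟩
      · exact Or.inl (Or.inr hwc)
      · exact Or.inr ⟨v, Or.inr hvc, hd⟩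

lemma roo_succ_not (h : ¬(n + 1 ∈ c ∨ ∃ v ∈ c, descends p (n + 1) v)) :
    rooPart (n + 1) p c = insert (n + 1) (rooPart n p c) := by
  ext w
  simp only [mem_rooPart, Finset.mem_insert]
  constructor
  · rintro ⟨⟨h1, h2⟩, h3⟩
    rcases Nat.lt_or_ge w (n + 1) with hw | hw
    · exact Or.inr ⟨⟨h1, by omega⟩, h3⟩
    · left; omega
  · rintro (rfl | ⟨⟨h1, h2⟩, h3⟩)
    · exact ⟨⟨by omega, le_refl _⟩, h⟩
    · exact ⟨⟨h1, by omega⟩, h3⟩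

lemma roo_succ_mem (hc : c ⊆ Finset.Icc 1 n)
    (h : n + 1 ∈ c ∨ ∃ v ∈ c, descends p (n + 1) v) :
    rooPart (n + 1) p c = rooPart n p c := by
  ext w
  simp only [mem_rooPart]
  constructor
  · rintro ⟨⟨h1, h2⟩, h3⟩
    refine ⟨⟨h1, ?_⟩, h3⟩
    rcases Nat.lt_or_ge w (n + 1) with hw | hw
    · omega
    · have hw' : w = n + 1 := by omega
      subst hw'
      exact absurd h h3
  · rintro ⟨⟨h1, h2⟩, h3⟩
    exact ⟨⟨h1, by omega⟩, h3⟩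

lemma roo_insert_succ (hc : c ⊆ Finset.Icc 1 n) :
    rooPart (n + 1) p (insert (n + 1) c) = rooPart n p c := by
  ext w
  simp only [mem_rooPart, Finset.mem_insert]
  constructor
  · rintro ⟨⟨h1, h2⟩, h3⟩
    refine ⟨⟨h1, ?_⟩, fun hcon => h3 ?_⟩
    · rcases Nat.lt_or_ge w (n + 1) with hw | hw
      · omega
      · exact absurd (Or.inl (Or.inl (by omega))) h3
    · rcases hcon with hwc | ⟨v, hvc, hd⟩
      · exact Or.inl (Or.inr hwc)
      · exact Or.inr ⟨v, Or.inr hvc, hd⟩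
  · rintro ⟨⟨h1, h2⟩, h3⟩
    refine ⟨⟨h1, by omega⟩, fun hcon => h3 ?_⟩
    rcases hcon with (hwc | hwc) | ⟨v, (rfl | hvc), hd⟩
    · omega
    · exact Or.inl hwc
    · exact absurd (descends_lt hp hp0 h1 (by omega) hd) (by omega)
    · exact Or.inr ⟨v, hvc, hd⟩

end SetIds

noncomputable def allCuts (n : ℕ) (p : ℕ → ℕ) : Finset (Finset ℕ) :=
  letI := Classical.decPred fun c : Finset ℕ => ∀ v ∈ c, ∀ w ∈ c, ¬descends p w v
  (Finset.Icc 1 n).powerset.filter fun c => ∀ v ∈ c, ∀ w ∈ c, ¬descends p w v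

lemma mem_allCuts {n : ℕ} {p : ℕ → ℕ} {c : Finset ℕ} :
    c ∈ allCuts n p ↔ c ⊆ Finset.Icc 1 n ∧ ∀ v ∈ c, ∀ w ∈ c, ¬descends p w v := by
  simp [allCuts, Finset.mem_filter, Finset.mem_powerset]

theorem master (p : ℕ → ℕ) (hp0 : p 0 = 0) :
    ∀ (n : ℕ), (∀ v, 1 ≤ v → v ≤ n → p v < v) →
    ∀ (f : ℕ → ℝ → ℝ), (∀ w, Continuous (f w)) → ∀ (s u t : ℝ),
    forestIntAux s p (Finset.Icc 1 n) f t =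
      ∑ c ∈ allCuts n p,
        forestIntAux u p (rooPart n p c) f t * forestIntAux s p (leaPart n p c) f u := by
  intro n
  induction n with
  | zero =>
    intro hp f hf s u t
    have h1 : Finset.Icc 1 0 = (∅ : Finset ℕ) := Finset.Icc_eq_empty (by omega)
    have h2 : allCuts 0 p = {∅} := by
      ext c
      simp only [mem_allCuts, h1, Finset.subset_empty, Finset.mem_singleton]
      constructor
      · exact fun h => h.1
      · rintro rfl
        exact ⟨rfl, by simp⟩
    have h3 : leaPart 0 p ∅ = ∅ := by
      ext w
      simp [mem_leaPart]
    have h4 : rooPart 0 p ∅ = ∅ := by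
      ext w
      simp only [mem_rooPart, Finset.notMem_empty, iff_false]
      rintro ⟨⟨h1', h2'⟩, -⟩
      omega
    rw [h1, h2, Finset.sum_singleton, h3, h4, forestIntAux_empty, forestIntAux_empty,
      forestIntAux_empty]
    norm_num
  | succ n ih =>
    intro hp f hf s u t
    classical
    have hpn : ∀ v, 1 ≤ v → v ≤ n → p v < v := fun v h1 h2 => hp v h1 (by omega)
    have hIcc : Finset.Icc 1 (n + 1) = insert (n + 1) (Finset.Icc 1 n) := by
      ext w; simp only [Finset.mem_Icc, Finset.mem_insert]; omega
    have hNIcc : (n + 1) ∉ Finset.Icc 1 n := by simp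
    have hmaxIcc : ∀ w ∈ Finset.Icc 1 n, w ≤ n + 1 := by
      intro w hw; simp only [Finset.mem_Icc] at hw; omega
    -- the splitting of the set of cuts
    have hsub_of_mem : ∀ c ∈ allCuts n p, c ⊆ Finset.Icc 1 n := fun c hc => (mem_allCuts.mp hc).1
    have hNnot : ∀ c ∈ allCuts n p, (n + 1) ∉ c := by
      intro c hc hmem
      have := (mem_allCuts.mp hc).1 hmem
      simp only [Finset.mem_Icc] at this; omega
    have hsplit : allCuts (n + 1) p = allCuts n p ∪
        ((allCuts n p).filter fun c => ∀ v ∈ c, ¬descends p (n + 1) v).image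
          (insert (n + 1)) := by
      ext c
      simp only [Finset.mem_union, Finset.mem_image, Finset.mem_filter]
      constructor
      · intro hc
        obtain ⟨hcs, hca⟩ := mem_allCuts.mp hc
        by_cases hN : (n + 1) ∈ c
        · right
          refine ⟨c.erase (n + 1), ⟨mem_allCuts.mpr ⟨?_, ?_⟩, ?_⟩, Finset.insert_erase hN⟩
          · intro w hw
            have h1 := hcs (Finset.mem_of_mem_erase hw)
            have h2 := Finset.ne_of_mem_erase hw
            simp only [Finset.mem_Icc] at h1 ⊢
            omega
          · exact fun v hv w hw =>
              hca v (Finset.mem_of_mem_erase hv) w (Finset.mem_of_mem_erase hw)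
          · exact fun v hv => hca v (Finset.mem_of_mem_erase hv) (n + 1) hN
        · left
          refine mem_allCuts.mpr ⟨?_, hca⟩
          intro w hw
          have h1 := hcs hw
          simp only [Finset.mem_Icc] at h1 ⊢
          have : w ≠ n + 1 := fun hc' => hN (hc' ▸ hw)
          omega
      · rintro (hc | ⟨c', ⟨hc', hQ⟩, rfl⟩)
        · obtain ⟨hcs, hca⟩ := mem_allCuts.mp hc
          exact mem_allCuts.mpr ⟨hcs.trans (by rw [hIcc]; exact Finset.subset_insert _ _), hca⟩
        · obtain ⟨hcs, hca⟩ := mem_allCuts.mp hc'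
          refine mem_allCuts.mpr ⟨?_, ?_⟩
          · rw [hIcc]; exact Finset.insert_subset_insert _ hcs
          · intro v hv w hw
            rcases Finset.mem_insert.mp hv with rfl | hv' <;>
              rcases Finset.mem_insert.mp hw with h | hw'
            · intro hd
              subst h
              have h1 := descends_lt hp hp0 (by omega) (le_refl _) hd
              omega
            · intro hd
              have h2 := hcs hw'
              simp only [Finset.mem_Icc] at h2
              have h1 := descends_lt hp hp0 h2.1 (by omega) hd
              omega
            · rw [h] at *; exact hQ v hv'
            · exact hca v hv' w hw'
    have hdisj : Disjoint (allCuts n p)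
        (((allCuts n p).filter fun c => ∀ v ∈ c, ¬descends p (n + 1) v).image
          (insert (n + 1))) := by
      rw [Finset.disjoint_right]
      rintro c hc1 hc2
      obtain ⟨c', hc', rfl⟩ := Finset.mem_image.mp hc1
      exact hNnot _ hc2 (Finset.mem_insert_self _ _)
    have hinj : ∀ c1 ∈ (allCuts n p).filter fun c => ∀ v ∈ c, ¬descends p (n + 1) v,
        ∀ c2 ∈ (allCuts n p).filter fun c => ∀ v ∈ c, ¬descends p (n + 1) v,
        insert (n + 1) c1 = insert (n + 1) c2 → c1 = c2 := by
      intro c1 h1 c2 h2 he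
      have k1 : (n + 1) ∉ c1 := hNnot _ (Finset.mem_filter.mp h1).1
      have k2 : (n + 1) ∉ c2 := hNnot _ (Finset.mem_filter.mp h2).1
      rw [← Finset.erase_insert k1, ← Finset.erase_insert k2, he]
    rw [hsplit, Finset.sum_union hdisj, Finset.sum_image hinj, Finset.sum_filter,
      ← Finset.sum_add_distrib]
    rcases Nat.eq_zero_or_pos (p (n + 1)) with hpN | hpN
    · -- the new vertex n+1 is an isolated root
      rw [hIcc, forestIntAux_insert_root s p f t hNIcc hmaxIcc (by rw [hpN]; simp),
        ih hpn f hf s u t, Finset.mul_sum]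
      apply Finset.sum_congr rfl
      intro c hc
      obtain ⟨hcsub, hanti⟩ := mem_allCuts.mp hc
      have hc1n : ∀ w ∈ c, 1 ≤ w ∧ w ≤ n := by
        intro w hw; simpa using (Finset.mem_Icc.mp (hcsub hw))
      have hnot : ¬((n + 1) ∈ c ∨ ∃ v ∈ c, descends p (n + 1) v) := by
        rintro (h | ⟨v, hv, hd⟩)
        · exact absurd (hc1n _ h).2 (by omega)
        · have := descends_zero hp hp0 hpN hd
          have := (hc1n v hv).1
          omega
      have hQc : ∀ v ∈ c, ¬descends p (n + 1) v := by
        intro v hv hd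
        exact hnot (Or.inr ⟨v, hv, hd⟩)
      rw [if_pos hQc, roo_succ_not hp hp0 hnot, lea_succ_not hnot,
        roo_insert_succ hp hp0 hcsub, lea_insert_succ hp hp0 hcsub]
      have hNroo : (n + 1) ∉ rooPart n p c := fun h => by
        have := (mem_rooPart.mp h).1.2; omega
      have hNlea : (n + 1) ∉ leaPart n p c := fun h => by
        have := (mem_leaPart.mp h).1.2; omega
      have hmaxroo : ∀ w ∈ rooPart n p c, w ≤ n + 1 := fun w hw => by
        have := (mem_rooPart.mp hw).1.2; omega
      have hmaxlea : ∀ w ∈ leaPart n p c, w ≤ n + 1 := fun w hw => by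
        have := (mem_leaPart.mp hw).1.2; omega
      have hproo : p (n + 1) ∉ rooPart n p c := fun h => by
        have := (mem_rooPart.mp h).1.1; omega
      have hplea : p (n + 1) ∉ leaPart n p c := fun h => by
        have := (mem_leaPart.mp h).1.1; omega
      rw [forestIntAux_insert_root u p f t hNroo hmaxroo hproo,
        forestIntAux_insert_root s p f u hNlea hmaxlea hplea]
      have hadd : (∫ y in s..u, f (n + 1) y) + (∫ y in u..t, f (n + 1) y)
          = ∫ y in s..t, f (n + 1) y :=
        intervalIntegral.integral_add_adjacent_intervals
          ((hf (n + 1)).intervalIntegrable _ _) ((hf (n + 1)).intervalIntegrable _ _)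
      rw [← hadd]
      ring
    · -- the new vertex n+1 is a leaf attached to m = p (n+1)
      have hm1 : 1 ≤ p (n + 1) := hpN
      have hmn : p (n + 1) ≤ n := by have := hp (n + 1) (by omega) (le_refl _); omega
      have hmIcc : p (n + 1) ∈ Finset.Icc 1 n := Finset.mem_Icc.mpr ⟨hm1, hmn⟩
      have hcontgs : Continuous fun x => f (p (n + 1)) x * ∫ y in s..x, f (n + 1) y :=
        (hf _).mul (cont_primitive (hf (n + 1)) s)
      rw [hIcc, forestIntAux_insert_leaf s p f t hNIcc hmaxIcc hmIcc,
        ih hpn _ (cont_update hf hcontgs) s u t]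
      apply Finset.sum_congr rfl
      intro c hc
      obtain ⟨hcsub, hanti⟩ := mem_allCuts.mp hc
      have hc1n : ∀ w ∈ c, 1 ≤ w ∧ w ≤ n := by
        intro w hw; simpa using (Finset.mem_Icc.mp (hcsub hw))
      have hNroo : (n + 1) ∉ rooPart n p c := fun h => by
        have := (mem_rooPart.mp h).1.2; omega
      have hNlea : (n + 1) ∉ leaPart n p c := fun h => by
        have := (mem_leaPart.mp h).1.2; omega
      have hmaxroo : ∀ w ∈ rooPart n p c, w ≤ n + 1 := fun w hw => by
        have := (mem_rooPart.mp hw).1.2; omega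
      have hmaxlea : ∀ w ∈ leaPart n p c, w ≤ n + 1 := fun w hw => by
        have := (mem_leaPart.mp hw).1.2; omega
      by_cases hQ : ∀ v ∈ c, ¬descends p (n + 1) v
      · rw [if_pos hQ]
        have hmnotlea : ¬(p (n + 1) ∈ c ∨ ∃ v ∈ c, descends p (p (n + 1)) v) := by
          rintro (hmc | ⟨v, hv, hd⟩)
          · exact hQ _ hmc ⟨1, one_pos, by simp⟩
          · exact hQ v hv (descends_cons.mpr (Or.inr hd))
        have hnotN : ¬((n + 1) ∈ c ∨ ∃ v ∈ c, descends p (n + 1) v) := by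
          rintro (h | ⟨v, hv, hd⟩)
          · exact absurd (hc1n _ h).2 (by omega)
          · exact hQ v hv hd
        rw [lea_succ_not hnotN, roo_succ_not hp hp0 hnotN,
          roo_insert_succ hp hp0 hcsub, lea_insert_succ hp hp0 hcsub]
        have hmroo : p (n + 1) ∈ rooPart n p c := mem_rooPart.mpr ⟨⟨hm1, hmn⟩, hmnotlea⟩
        have hmnlea : p (n + 1) ∉ leaPart n p c := fun h => hmnotlea (mem_leaPart.mp h).2
        rw [forestIntAux_insert_leaf u p f t hNroo hmaxroo hmroo,
          forestIntAux_insert_root s p f u hNlea hmaxlea hmnlea]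
        have hlin := forestIntAux_linear u p t (rooPart n p c) f (p (n + 1))
          (∫ y in s..u, f (n + 1) y) (f (p (n + 1)))
          (fun x => f (p (n + 1)) x * ∫ y in u..x, f (n + 1) y) hf (hf _)
          ((hf _).mul (cont_primitive (hf (n + 1)) u)) hmroo
        have e1 : (fun x => (∫ y in s..u, f (n + 1) y) * f (p (n + 1)) x
              + f (p (n + 1)) x * ∫ y in u..x, f (n + 1) y)
            = fun x => f (p (n + 1)) x * ∫ y in s..x, f (n + 1) y := by
          funext x
          have : (∫ y in s..u, f (n + 1) y) + (∫ y in u..x, f (n + 1) y)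
              = ∫ y in s..x, f (n + 1) y :=
            intervalIntegral.integral_add_adjacent_intervals
              ((hf (n + 1)).intervalIntegrable _ _) ((hf (n + 1)).intervalIntegrable _ _)
          rw [← this]; ring
        rw [e1, Function.update_eq_self] at hlin
        rw [hlin]
        have hlea : forestIntAux s p (leaPart n p c)
            (Function.update f (p (n + 1))
              fun x => f (p (n + 1)) x * ∫ y in s..x, f (n + 1) y) u
            = forestIntAux s p (leaPart n p c) f u := by
          apply forestIntAux_congr
          intro w hw
          exact Function.update_of_ne (by rintro rfl; exact hmnlea hw) _ _
        rw [hlea]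
        ring
      · rw [if_neg hQ]
        push_neg at hQ
        obtain ⟨v, hv, hd⟩ := hQ
        have hmem : (n + 1) ∈ c ∨ ∃ v ∈ c, descends p (n + 1) v := Or.inr ⟨v, hv, hd⟩
        have hQm : p (n + 1) ∈ c ∨ ∃ v' ∈ c, descends p (p (n + 1)) v' := by
          rcases descends_cons.mp hd with h | h
          · exact Or.inl (h ▸ hv)
          · exact Or.inr ⟨v, hv, h⟩
        rw [lea_succ_mem hp hp0 hcsub hmem, roo_succ_mem hp hp0 hcsub hmem]
        have hmlea : p (n + 1) ∈ leaPart n p c := mem_leaPart.mpr ⟨⟨hm1, hmn⟩, hQm⟩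
        have hmnroo : p (n + 1) ∉ rooPart n p c := fun h => (mem_rooPart.mp h).2 hQm
        rw [forestIntAux_insert_leaf s p f u hNlea hmaxlea hmlea]
        have hroo : forestIntAux u p (rooPart n p c)
            (Function.update f (p (n + 1))
              fun x => f (p (n + 1)) x * ∫ y in s..x, f (n + 1) y) t
            = forestIntAux u p (rooPart n p c) f t := by
          apply forestIntAux_congr
          intro w hw
          exact Function.update_of_ne (by rintro rfl; exact hmnroo hw) _ _
        rw [hroo, add_zero]

end TreeChenAux

/-- **Tree Chen property**. -/
theorem tree_chen_property (d n : ℕ) (hn : 1 ≤ n) (p : ℕ → ℕ)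
    (hp : ∀ v, 1 ≤ v → v ≤ n → p v < v) (hp0 : p 0 = 0)
    (ℓ : ℕ → Fin d) (Γ : ℝ → Fin d → ℝ) (hΓ : ContDiff ℝ 1 Γ) (s u t : ℝ) :
    forestIntegral Γ ℓ p (Finset.Icc 1 n) t s
        - forestIntegral Γ ℓ p (Finset.Icc 1 n) t u
        - forestIntegral Γ ℓ p (Finset.Icc 1 n) u s =
      ∑ c ∈ admissibleCuts n p,
        forestIntegral Γ ℓ p (rooPart n p c) t u * forestIntegral Γ ℓ p (leaPart n p c) u s := by
  classical
  simp only [forestIntegral]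
  set f : ℕ → ℝ → ℝ := fun v x => deriv (fun y => Γ y (ℓ v)) x with hfdef
  have hf : ∀ v, Continuous (f v) := by
    intro v
    have h1 : ContDiff ℝ 1 fun y => Γ y (ℓ v) := (contDiff_pi.mp hΓ) (ℓ v)
    exact h1.continuous_deriv (le_refl _)
  set R : Finset ℕ := (Finset.Icc 1 n).filter fun v => p v = 0 with hRdef
  have h1R : 1 ∈ R := by
    rw [hRdef]
    refine Finset.mem_filter.mpr ⟨Finset.mem_Icc.mpr ⟨le_refl _, hn⟩, ?_⟩
    have := hp 1 (le_refl _) hn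
    omega
  have hRE : R ≠ (∅ : Finset ℕ) := fun h => by rw [h] at h1R; simp at h1R
  have hRall : R ∈ allCuts n p := by
    refine mem_allCuts.mpr ⟨Finset.filter_subset _ _, ?_⟩
    intro v hv w hw hd
    have hw0 : p w = 0 := (Finset.mem_filter.mp hw).2
    have hv1 : 1 ≤ v := (Finset.mem_Icc.mp (Finset.mem_filter.mp hv).1).1
    have := descends_zero hp hp0 hw0 hd
    omega
  have hEall : (∅ : Finset ℕ) ∈ allCuts n p :=
    mem_allCuts.mpr ⟨Finset.empty_subset _, by simp⟩
  have hEnotadm : (∅ : Finset ℕ) ∉ admissibleCuts n p := by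
    intro h
    have := (Finset.mem_filter.mp h).2.2.2.1
    simp at this
  have hRnotadm : R ∉ admissibleCuts n p := by
    intro h
    exact (Finset.mem_filter.mp h).2.2.2.2 rfl
  have hAC : allCuts n p = insert ∅ (insert R (admissibleCuts n p)) := by
    ext c
    simp only [Finset.mem_insert]
    constructor
    · intro hc
      obtain ⟨h1, h2⟩ := mem_allCuts.mp hc
      by_cases hc0 : c = ∅
      · exact Or.inl hc0
      · by_cases hcR : c = R
        · exact Or.inr (Or.inl hcR)
        · refine Or.inr (Or.inr ?_)
          rw [admissibleCuts]
          exact Finset.mem_filter.mpr ⟨Finset.mem_powerset.mpr h1,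
            h1, h2, Finset.nonempty_of_ne_empty hc0, hcR⟩
    · rintro (rfl | rfl | h)
      · exact hEall
      · exact hRall
      · rw [admissibleCuts] at h
        obtain ⟨hh1, hh2⟩ := Finset.mem_filter.mp h
        exact mem_allCuts.mpr ⟨hh2.1, hh2.2.1⟩
  have hleaE : leaPart n p ∅ = ∅ := by
    ext w
    simp [mem_leaPart]
  have hrooE : rooPart n p ∅ = Finset.Icc 1 n := by
    rw [rooPart, hleaE, Finset.sdiff_empty]
  have hleaR : leaPart n p R = Finset.Icc 1 n := by
    ext w
    simp only [mem_leaPart, Finset.mem_Icc]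
    constructor
    · rintro ⟨⟨h1, h2⟩, -⟩
      exact ⟨h1, h2⟩
    · rintro ⟨h1, h2⟩
      refine ⟨⟨h1, h2⟩, ?_⟩
      obtain ⟨r, hr1, hrn, hr0, hr⟩ := exists_root hp hp0 w h1 h2
      have hrR : r ∈ R :=
        Finset.mem_filter.mpr ⟨Finset.mem_Icc.mpr ⟨hr1, hrn⟩, hr0⟩
      rcases hr with rfl | hd
      · exact Or.inl hrR
      · exact Or.inr ⟨r, hrR, hd⟩
  have hrooR : rooPart n p R = ∅ := by
    rw [rooPart, hleaR, Finset.sdiff_self]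
  have hM := master p hp0 n hp f hf s u t
  rw [hAC, Finset.sum_insert (by simp [hEnotadm, Ne.symm hRE]),
    Finset.sum_insert hRnotadm, hleaE, hrooE, hleaR, hrooR,
    forestIntAux_empty, forestIntAux_empty] at hM
  rw [hM]
  ring
end

section
/- Let f : ℝ → ℝ be smooth and compactly supported with ∫_ℝ f(x) dx = 0 (equivalently, ℱf(0) = 0). Then the function ξ ↦ ℱf(ξ)/(iξ) is absolutely integrable on ℝ (the singularity at ξ = 0 being removable), and the formal integral ∫^t f := (2π)^{−1/2} ∫_ℝ ℱf(ξ) e^{itξ}/(iξ) dξ is an antiderivative of f in the sense that for all s, t ∈ ℝ, ∫^t f − ∫^s f = ∫_s^t f(x) dx. -/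
open MeasureTheory

/-- The Fourier transform with the normalization `ℱf(ξ) = (2π)^{-1/2} ∫ f(x) e^{-ixξ} dx`. -/
noncomputable def fourierT (f : ℝ → ℝ) (ξ : ℝ) : ℂ :=
  ((Real.sqrt (2 * Real.pi) : ℝ) : ℂ)⁻¹ *
    ∫ x : ℝ, (f x : ℂ) * Complex.exp (-(Complex.I * (x : ℂ) * (ξ : ℂ)))

/-- The formal integral `∫^t f := (2π)^{-1/2} ∫ ℱf(ξ) e^{itξ}/(iξ) dξ`. -/
noncomputable def formalIntegral (f : ℝ → ℝ) (t : ℝ) : ℂ :=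
  ((Real.sqrt (2 * Real.pi) : ℝ) : ℂ)⁻¹ *
    ∫ ξ : ℝ, fourierT f ξ * Complex.exp (Complex.I * (t : ℂ) * (ξ : ℂ)) / (Complex.I * (ξ : ℂ))

open Real Complex FourierTransform

lemma fourierT_eq (h : ℝ → ℝ) (ξ : ℝ) :
    fourierT h ξ = ((Real.sqrt (2 * Real.pi) : ℝ) : ℂ)⁻¹ *
      𝓕 (fun x => (h x : ℂ)) (ξ / (2 * π)) := by
  unfold fourierT
  congr 1
  rw [Real.fourier_eq']
  refine MeasureTheory.integral_congr_ae (Filter.Eventually.of_forall fun x => ?_)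
  have h2π : (2:ℝ) * π ≠ 0 := by positivity
  simp only [RCLike.inner_apply, conj_trivial, smul_eq_mul]
  rw [mul_comm]
  congr 1
  have : ((-2 * π * (x * (ξ / (2 * π)))) : ℝ) = -(x * ξ) := by field_simp
  rw [mul_comm (ξ / (2 * π)) x, this]
  push_cast
  ring_nf


/-- For a smooth compactly supported `f` with vanishing mean, `ξ ↦ ℱf(ξ)/(iξ)` is
absolutely integrable and the formal integral `∫^t f` is an antiderivative of `f`. -/
theorem formal_integral_is_antiderivative (f : ℝ → ℝ)
    (hf : ContDiff ℝ (⊤ : ℕ∞) f) (hsupp : HasCompactSupport f)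
    (hzero : (∫ x : ℝ, f x) = 0) :
    Integrable (fun ξ : ℝ => fourierT f ξ / (Complex.I * (ξ : ℂ))) ∧
    ∀ s t : ℝ, formalIntegral f t - formalIntegral f s = ∫ x in s..t, (f x : ℂ) := by
  have h2π : (0:ℝ) < 2 * π := by positivity
  have hsq : ((Real.sqrt (2 * π) : ℝ) : ℂ) * ((Real.sqrt (2 * π) : ℝ) : ℂ) = ((2 * π : ℝ) : ℂ) := by
    rw [← Complex.ofReal_mul, Real.mul_self_sqrt h2π.le]
  set c : ℂ := ((Real.sqrt (2 * Real.pi) : ℝ) : ℂ)⁻¹ with hc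
  obtain ⟨R, hRpos, hR⟩ := hsupp.exists_pos_le_norm
  have hfc : Continuous f := hf.continuous
  have hfi : Integrable f := hfc.integrable_of_hasCompactSupport hsupp
  set g : ℝ → ℝ := fun t => ∫ x in (-R)..t, f x with hg
  have hgderiv : ∀ t, HasDerivAt g (f t) t := fun t =>
    intervalIntegral.integral_hasDerivAt_right (hfc.intervalIntegrable _ _)
      (hfc.stronglyMeasurableAtFilter _ _) hfc.continuousAt
  have hgsupp : HasCompactSupport g := by
    apply HasCompactSupport.intro (isCompact_Icc (a := -R) (b := R))
    intro t ht
    simp only [Set.mem_Icc, not_and_or, not_le] at ht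
    rcases ht with ht | ht
    · rw [hg]
      simp only
      rw [intervalIntegral.integral_congr (g := fun _ => (0:ℝ)) ?_, intervalIntegral.integral_zero]
      intro x hx
      rw [Set.uIcc_of_ge ht.le] at hx
      refine hR x ?_
      rw [Real.norm_eq_abs]
      exact le_abs.2 (Or.inr (by linarith [hx.2]))
    · rw [hg]
      simp only
      rw [intervalIntegral.integral_eq_integral_of_support_subset, hzero]
      intro x hx
      have : |x| < R := by
        by_contra hc
        exact hx (hR x (by rw [Real.norm_eq_abs]; linarith [not_lt.1 hc]))
      rcases abs_lt.1 this with ⟨h1, h2⟩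
      exact ⟨h1, by linarith⟩
  have hgdiff : Differentiable ℝ g := fun t => (hgderiv t).differentiableAt
  have hgd : deriv g = f := funext fun t => (hgderiv t).deriv
  have hgsm : ContDiff ℝ (⊤ : ℕ∞) g := by
    rw [contDiff_infty_iff_deriv]
    exact ⟨hgdiff, by rw [hgd]; exact hf⟩
  set gC : ℝ → ℂ := fun t => (g t : ℂ) with hgC
  set fC : ℝ → ℂ := fun t => (f t : ℂ) with hfC
  have hgCderiv : ∀ t, HasDerivAt gC (fC t) t := fun t => (hgderiv t).ofReal_comp
  have hgCdiff : Differentiable ℝ gC := fun t => (hgCderiv t).differentiableAt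
  have hgCd : deriv gC = fC := funext fun t => (hgCderiv t).deriv
  have hgCc : Continuous gC := Complex.continuous_ofReal.comp hgsm.continuous
  have hfCc : Continuous fC := Complex.continuous_ofReal.comp hfc
  have hgCsupp : HasCompactSupport gC := hgsupp.comp_left (g := Complex.ofReal) rfl
  have hfCsupp : HasCompactSupport fC := hsupp.comp_left (g := Complex.ofReal) rfl
  have hgCi : Integrable gC := hgCc.integrable_of_hasCompactSupport hgCsupp
  have hfCi : Integrable fC := hfCc.integrable_of_hasCompactSupport hfCsupp
  -- Fourier transform of derivative
  have key1 : 𝓕 fC = fun w : ℝ => (2 * π * Complex.I * w) • (𝓕 gC w) := by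
    rw [← hgCd]
    exact Real.fourier_deriv hgCi hgCdiff (by rw [hgCd]; exact hfCi)
  -- second derivative
  have hf'c : Continuous (deriv f) := ((contDiff_infty_iff_deriv.1 hf).2).continuous
  have hf'supp : HasCompactSupport (deriv f) := hsupp.deriv
  set f'C : ℝ → ℂ := fun t => ((deriv f t : ℝ) : ℂ) with hf'C
  have hf'Cc : Continuous f'C := Complex.continuous_ofReal.comp hf'c
  have hf'Csupp : HasCompactSupport f'C := hf'supp.comp_left (g := Complex.ofReal) rfl
  have hf'Ci : Integrable f'C := hf'Cc.integrable_of_hasCompactSupport hf'Csupp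
  have hfCderiv : ∀ t, HasDerivAt fC (f'C t) t := fun t =>
    ((hf.differentiable (by simp) t).hasDerivAt).ofReal_comp
  have hfCdiff : Differentiable ℝ fC := fun t => (hfCderiv t).differentiableAt
  have hfCd : deriv fC = f'C := funext fun t => (hfCderiv t).deriv
  have key2 : 𝓕 f'C = fun w : ℝ => (2 * π * Complex.I * w) • (𝓕 fC w) := by
    rw [← hfCd]
    exact Real.fourier_deriv hfCi hfCdiff (by rw [hfCd]; exact hf'Ci)
  -- integrability of 𝓕 gC
  have hFgCc : Continuous (𝓕 gC) := by
    apply VectorFourier.fourierIntegral_continuous Real.continuous_fourierChar _ hgCi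
    exact (innerSL ℝ (E := ℝ)).continuous₂
  have hFgCi : Integrable (𝓕 gC) := by
    set M : ℝ := (∫ x, ‖gC x‖) + (∫ x, ‖f'C x‖) with hM
    have hbound : ∀ w : ℝ, ‖𝓕 gC w‖ ≤ M * (1 + w ^ 2)⁻¹ := by
      intro w
      have hb0 : ‖𝓕 gC w‖ ≤ ∫ x, ‖gC x‖ :=
        VectorFourier.norm_fourierIntegral_le_integral_norm _ _ _ _ _
      have hb2 : ‖𝓕 f'C w‖ ≤ ∫ x, ‖f'C x‖ :=
        VectorFourier.norm_fourierIntegral_le_integral_norm _ _ _ _ _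
      have heq : ‖𝓕 f'C w‖ = (2 * π * |w|) ^ 2 * ‖𝓕 gC w‖ := by
        rw [key2]
        simp only [key1, smul_smul, norm_smul, norm_mul, map_mul, Complex.norm_two,
          Complex.norm_I, Complex.norm_real, Real.norm_eq_abs, mul_one, abs_of_pos Real.pi_pos]
        ring
      have hw2 : w ^ 2 * ‖𝓕 gC w‖ ≤ ∫ x, ‖f'C x‖ := by
        have h1 : w ^ 2 ≤ (2 * π * |w|) ^ 2 := by
          have hπ : (3:ℝ) < π := Real.pi_gt_three
          have h4 : (2 * π * |w|) ^ 2 = 4 * π ^ 2 * w ^ 2 := by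
            rw [mul_pow, mul_pow, _root_.sq_abs]; ring
          rw [h4]
          have h9 : (1:ℝ) ≤ 4 * π ^ 2 := by nlinarith
          calc w ^ 2 = 1 * w ^ 2 := (one_mul _).symm
            _ ≤ 4 * π ^ 2 * w ^ 2 := mul_le_mul_of_nonneg_right h9 (sq_nonneg w)
        nlinarith [norm_nonneg (𝓕 gC w), heq ▸ hb2]
      have hpos : (0:ℝ) < 1 + w ^ 2 := by positivity
      have hMle : (1 + w ^ 2) * ‖𝓕 gC w‖ ≤ M := by nlinarith [norm_nonneg (𝓕 gC w)]
      calc ‖𝓕 gC w‖ = ((1 + w ^ 2) * ‖𝓕 gC w‖) * (1 + w ^ 2)⁻¹ := by field_simp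
        _ ≤ M * (1 + w ^ 2)⁻¹ := mul_le_mul_of_nonneg_right hMle (by positivity)
    refine (integrable_inv_one_add_sq.const_mul M).mono' hFgCc.aestronglyMeasurable
      (Filter.Eventually.of_forall fun w => ?_)
    simpa using hbound w
  -- inversion
  have hinv : 𝓕⁻ (𝓕 gC) = gC := hgCc.fourierInv_fourier_eq hgCi hFgCi
  -- relation between fourierT f and fourierT g
  have claim : ∀ ξ : ℝ, fourierT f ξ = (Complex.I * ξ) * fourierT g ξ := by
    intro ξ
    rw [fourierT_eq, fourierT_eq, key1]
    have : (2 * (π:ℂ) * Complex.I * ((ξ / (2*π) : ℝ) : ℂ)) = Complex.I * ξ := by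
      push_cast
      have : ((2:ℂ) * π) ≠ 0 := by
        simpa using Complex.ofReal_ne_zero.2 (ne_of_gt h2π)
      field_simp
    simp only [smul_eq_mul]
    rw [this, ← hgC]
    ring
  -- conclusion 1 : integrability
  have h0 : ∀ᵐ ξ : ℝ, (ξ:ℝ) ≠ 0 := by
    refine ae_iff.2 ?_
    have : {a : ℝ | ¬ a ≠ 0} = {0} := by ext a; simp
    rw [this]
    exact measure_singleton 0
  have hTg : Integrable (fun ξ : ℝ => fourierT g ξ) := by
    have h1 : Integrable (fun ξ : ℝ => 𝓕 gC (ξ * (2*π)⁻¹)) :=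
      hFgCi.comp_mul_right' (by positivity)
    have h2 : (fun ξ : ℝ => fourierT g ξ) = fun ξ => c * 𝓕 gC (ξ * (2*π)⁻¹) := by
      funext ξ
      rw [fourierT_eq, div_eq_mul_inv]
    rw [h2]
    exact h1.const_mul c
  have haeq : (fun ξ : ℝ => fourierT g ξ) =ᵐ[volume]
      (fun ξ : ℝ => fourierT f ξ / (Complex.I * (ξ:ℂ))) := by
    filter_upwards [h0] with ξ hξ
    have hne : (Complex.I * (ξ:ℂ)) ≠ 0 :=
      mul_ne_zero Complex.I_ne_zero (Complex.ofReal_ne_zero.2 hξ)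
    rw [claim ξ, mul_div_cancel_left₀ _ hne]
  have conc1 : Integrable (fun ξ : ℝ => fourierT f ξ / (Complex.I * (ξ:ℂ))) :=
    hTg.congr haeq
  refine ⟨conc1, ?_⟩
  -- conclusion 2
  have hformal : ∀ u : ℝ,
      (c * ∫ ξ : ℝ, fourierT f ξ * Complex.exp (Complex.I * (u:ℂ) * (ξ:ℂ)) / (Complex.I * (ξ:ℂ)))
      = gC u := by
    intro u
    set K : ℝ → ℂ := fun w =>
      Complex.exp (((2 * π * (w * u) : ℝ) : ℂ) * Complex.I) • 𝓕 gC w with hK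
    have step1 : (∫ ξ : ℝ, fourierT f ξ * Complex.exp (Complex.I * (u:ℂ) * (ξ:ℂ)) / (Complex.I * (ξ:ℂ)))
        = ∫ ξ : ℝ, c * K ((2*π)⁻¹ * ξ) := by
      refine integral_congr_ae ?_
      filter_upwards [h0] with ξ hξ
      have hne : (Complex.I * (ξ:ℂ)) ≠ 0 :=
        mul_ne_zero Complex.I_ne_zero (Complex.ofReal_ne_zero.2 hξ)
      have harg : ((2*π)⁻¹ * ξ : ℝ) = ξ / (2*π) := by ring
      have harg2 : ((2 * π * ((2*π)⁻¹ * ξ * u) : ℝ) : ℂ) * Complex.I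
          = Complex.I * (u:ℂ) * (ξ:ℂ) := by
        have : (2 * π * ((2*π)⁻¹ * ξ * u) : ℝ) = ξ * u := by
          rw [← mul_assoc, ← mul_assoc, mul_inv_cancel₀ (by positivity : (2*π:ℝ) ≠ 0), one_mul]
        rw [this]; push_cast; ring
      rw [claim ξ, mul_assoc, mul_div_cancel_left₀ _ hne, hK]
      simp only [smul_eq_mul]
      rw [fourierT_eq, ← hgC, harg2, harg]
      ring
    have step2 : (∫ w : ℝ, K w) = gC u := by
      conv_rhs => rw [← hinv]
      rw [Real.fourierInv_eq']
      refine integral_congr_ae (Filter.Eventually.of_forall fun w => ?_)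
      rw [hK]
      norm_num [RCLike.inner_apply]
      left
      ring_nf
    rw [step1, integral_const_mul, MeasureTheory.Measure.integral_comp_inv_mul_left K (2*π), step2]
    rw [abs_of_pos h2π, Complex.real_smul]
    rw [hc, ← hsq]
    have hsqrt : ((Real.sqrt (2*π):ℝ):ℂ) ≠ 0 :=
      Complex.ofReal_ne_zero.2 (ne_of_gt (Real.sqrt_pos.2 h2π))
    calc ((Real.sqrt (2*π):ℝ):ℂ)⁻¹ * (((Real.sqrt (2*π):ℝ):ℂ)⁻¹ *
          (((Real.sqrt (2*π):ℝ):ℂ) * ((Real.sqrt (2*π):ℝ):ℂ) * gC u))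
        = (((Real.sqrt (2*π):ℝ):ℂ)⁻¹ * ((Real.sqrt (2*π):ℝ):ℂ)) *
          ((((Real.sqrt (2*π):ℝ):ℂ))⁻¹ * ((Real.sqrt (2*π):ℝ):ℂ)) * gC u := by ring
      _ = gC u := by rw [inv_mul_cancel₀ hsqrt]; ring
  intro s t
  have hfi2 : ∀ u : ℝ, formalIntegral f u = gC u := fun u => by
    rw [formalIntegral]; exact hformal u
  rw [hfi2 t, hfi2 s]
  have : (g t : ℂ) - (g s : ℂ) = ((g t - g s : ℝ) : ℂ) := by push_cast; ring
  rw [hgC]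
  simp only
  rw [this]
  have hsub : g t - g s = ∫ x in s..t, f x :=
    intervalIntegral.integral_interval_sub_left (hfc.intervalIntegrable _ _)
      (hfc.intervalIntegrable _ _)
  rw [hsub, intervalIntegral.integral_ofReal]
end

section
/- Rough paths from families of shuffle characters: let d ≥ 1 and for every t ∈ ℝ let χ^t be a character of the shuffle algebra over the alphabet {1,…,d}. For n ≥ 1, a word (i_1,…,i_n) ∈ {1,…,d}^n and s, t ∈ ℝ, define Γ^n_{ts}(i_1,…,i_n) := Σ_{k=0}^{n} (−1)^{n−k} χ^t(i_1,…,i_k) · χ^s(i_n, i_{n−1},…,i_{k+1}). Then: (Chen) for all s, u, t ∈ ℝ and n ≥ 2, Γ^n_{ts}(i_1,…,i_n) = Γ^n_{tu}(i_1,…,i_n) + Γ^n_{us}(i_1,…,i_n) + Σ_{k=1}^{n−1} Γ^k_{tu}(i_1,…,i_k) · Γ^{n−k}_{us}(i_{k+1},…,i_n); and (shuffle) for all s, t ∈ ℝ and all nonempty words u = (i_1,…,i_{n_1}), v = (j_1,…,j_{n_2}), Γ^{n_1}_{ts}(u) · Γ^{n_2}_{ts}(v) = Σ_S Γ^{n_1+n_2}_{ts}(k^S),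 the sum over all subsets S ⊆ {1,…,n_1+n_2} with |S| = n_1, k^S placing the letters of u in order at the positions of S and those of v at the remaining positions. -/
open Finset

namespace RPFC

variable {d : ℕ}

/-- totalize a word -/
noncomputable def pad (hd : 1 ≤ d) {n : ℕ} (w : Fin n → Fin d) : ℕ → Fin d :=
  fun i => if h : i < n then w ⟨i, h⟩ else ⟨0, hd⟩

/-- number of elements of `A` below `m` -/
def cnt (A : Finset ℕ) (m : ℕ) : ℕ := (A.filter (· < m)).card

noncomputable def mergeN (y₁ y₂ : ℕ → Fin d) (P : Finset ℕ) : ℕ → Fin d :=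
  fun m => if m ∈ P then y₁ (cnt P m) else y₂ (m - cnt P m)

lemma cnt_le (A : Finset ℕ) (m : ℕ) : cnt A m ≤ m := by
  have : A.filter (· < m) ⊆ Finset.range m := by
    intro x hx; simp only [mem_filter] at hx; simpa using hx.2
  simpa [cnt] using (Finset.card_le_card this)

lemma cnt_le_card (A : Finset ℕ) (m : ℕ) : cnt A m ≤ A.card :=
  Finset.card_filter_le _ _

lemma cnt_lt_card {A : Finset ℕ} {m : ℕ} (h : m ∈ A) : cnt A m < A.card := by
  apply Finset.card_lt_card
  constructor
  · exact Finset.filter_subset _ _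
  · intro hsub
    have := hsub h
    simp at this

lemma cnt_add_compl {N : ℕ} {A : Finset ℕ} (hA : A ⊆ Finset.range N) {m : ℕ} (hm : m ≤ N) :
    cnt A m + cnt (Finset.range N \ A) m = m := by
  classical
  have h1 : A.filter (· < m) = (Finset.range m).filter (· ∈ A) := by
    ext x; simp only [mem_filter, mem_range]; tauto
  have h2 : (Finset.range N \ A).filter (· < m) = (Finset.range m).filter (· ∉ A) := by
    ext x; simp only [mem_filter, mem_sdiff, mem_range]
    constructor
    · rintro ⟨⟨_, h⟩, h'⟩; exact ⟨h', h⟩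
    · rintro ⟨h', h⟩; exact ⟨⟨lt_of_lt_of_le h' hm, h⟩, h'⟩
  rw [cnt, cnt, h1, h2]
  rw [Finset.card_filter_add_card_filter_not, Finset.card_range]

/-- for `m ∉ A`, `m < N`, `A ⊆ range N`: the complement index is in range. -/
lemma sub_cnt_lt {N : ℕ} {A : Finset ℕ} (hA : A ⊆ Finset.range N) {m : ℕ}
    (hm : m < N) (hmA : m ∉ A) : m - cnt A m < N - A.card := by
  have h := cnt_add_compl hA (le_of_lt hm)
  have hmem : m ∈ Finset.range N \ A := by simp [hm, hmA]
  have h2 : cnt (Finset.range N \ A) m < (Finset.range N \ A).card := cnt_lt_card hmem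
  have h3 : (Finset.range N \ A).card = N - A.card := by
    rw [Finset.card_sdiff_of_subset hA, Finset.card_range]
  omega

/-- rank of a member via `orderIsoOfFin` equals `cnt` of the image. -/
lemma orderIso_val {N c : ℕ} (S : Finset (Fin N)) (hS : S.card = c) (m : Fin N) (hm : m ∈ S) :
    (((S.orderIsoOfFin hS).symm ⟨m, hm⟩ : Fin c) : ℕ) = cnt (S.image Fin.val) m.1 := by
  classical
  set i := (S.orderIsoOfFin hS).symm ⟨m, hm⟩ with hi
  have key : S.filter (· < m) =
      (Finset.Iio i).image (fun j => ((S.orderIsoOfFin hS) j : Fin N)) := by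
    ext x
    simp only [mem_filter, mem_image, Finset.mem_Iio]
    constructor
    · rintro ⟨hxS, hxm⟩
      refine ⟨(S.orderIsoOfFin hS).symm ⟨x, hxS⟩, ?_, ?_⟩
      · rw [hi]
        exact (S.orderIsoOfFin hS).symm.lt_iff_lt.mpr (Subtype.mk_lt_mk.mpr hxm)
      · simp
    · rintro ⟨j, hj, rfl⟩
      refine ⟨((S.orderIsoOfFin hS) j).2, ?_⟩
      have : (S.orderIsoOfFin hS) j < (S.orderIsoOfFin hS) i := by
        rw [(S.orderIsoOfFin hS).lt_iff_lt]; exact hj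
      have h2 : ((S.orderIsoOfFin hS) i : Fin N) = m := by rw [hi]; simp
      rw [← h2]
      exact this
  have hinj : Function.Injective (fun j => ((S.orderIsoOfFin hS) j : Fin N)) := by
    intro a b hab
    have := Subtype.coe_injective hab
    exact (S.orderIsoOfFin hS).injective this
  have hcnt : cnt (S.image Fin.val) m.1 = (S.filter (· < m)).card := by
    rw [cnt, Finset.filter_image]
    rw [Finset.card_image_of_injective _ Fin.val_injective]
    congr 1
  rw [hcnt, key, Finset.card_image_of_injective _ hinj, Fin.card_Iio]

lemma cnt_compl_image {N : ℕ} (S : Finset (Fin N)) (m : Fin N) :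
    cnt ((Sᶜ).image Fin.val) m.1 = m.1 - cnt (S.image Fin.val) m.1 := by
  classical
  have h1 : (S.image Fin.val) ⊆ Finset.range N := by
    intro x hx; simp only [mem_image] at hx; obtain ⟨y, _, rfl⟩ := hx; simp [y.2]
  have h2 : Finset.range N \ S.image Fin.val = (Sᶜ).image Fin.val := by
    ext x
    simp only [mem_sdiff, mem_range, mem_image, Finset.mem_compl]
    constructor
    · rintro ⟨hx, hnot⟩
      exact ⟨⟨x, hx⟩, fun h => hnot ⟨⟨x, hx⟩, h, rfl⟩, rfl⟩
    · rintro ⟨y, hy, rfl⟩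
      exact ⟨y.2, fun ⟨z, hz, hzy⟩ => hy (by rwa [Fin.val_injective hzy] at hz)⟩
  have := cnt_add_compl h1 (le_of_lt m.2)
  rw [h2] at this
  omega

noncomputable def Vy (y : ℕ → Fin d) (A : Finset ℕ) : ℕ → Fin d :=
  fun p => if p ∈ A then y (A.card - 1 - cnt A p) else y (A.card + (p - cnt A p))

lemma cnt_zero (A : Finset ℕ) : cnt A 0 = 0 := by
  simp [cnt, Finset.filter_false_of_mem]

lemma cnt_insert_zero {A : Finset ℕ} (hA : 0 ∉ A) {p : ℕ} (hp : 0 < p) :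
    cnt (insert 0 A) p = cnt A p + 1 := by
  rw [cnt, Finset.filter_insert, if_pos hp, Finset.card_insert_of_notMem, cnt]
  intro h
  exact hA (Finset.mem_of_mem_filter _ h)

lemma cnt_lt_self {A : Finset ℕ} (hA : 0 ∉ A) {p : ℕ} (hp : 0 < p) : cnt A p < p := by
  have : A.filter (· < p) ⊆ Finset.Ico 1 p := by
    intro x hx
    simp only [mem_filter] at hx
    simp only [Finset.mem_Ico]
    refine ⟨?_, hx.2⟩
    rcases Nat.eq_zero_or_pos x with h | h
    · exact absurd (h ▸ hx.1) hA
    · exact h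
  have := Finset.card_le_card this
  rw [Nat.card_Ico] at this
  rw [cnt]
  omega

lemma Vy_insert {y : ℕ → Fin d} {A : Finset ℕ} (hA : 0 ∉ A) :
    Vy y (insert 0 A) = Vy y A := by
  funext p
  rw [Vy, Vy, Finset.card_insert_of_notMem hA]
  rcases Nat.eq_zero_or_pos p with rfl | hp
  · rw [if_pos (Finset.mem_insert_self 0 A), if_neg hA, cnt_zero, cnt_zero]
    congr 1
  · rw [cnt_insert_zero hA hp]
    have hcp := cnt_lt_self hA hp
    by_cases hpA : p ∈ A
    · rw [if_pos (Finset.mem_insert_of_mem hpA), if_pos hpA]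
      congr 1
      omega
    · rw [if_neg ?_, if_neg hpA]
      · congr 1
        omega
      · simp only [Finset.mem_insert]
        push_neg
        exact ⟨by omega, hpA⟩

lemma mem_image_val {N : ℕ} (S : Finset (Fin N)) (m : Fin N) :
    m.1 ∈ S.image Fin.val ↔ m ∈ S := by
  simp only [mem_image]
  constructor
  · rintro ⟨y, hy, h⟩; rwa [Fin.val_injective h] at hy
  · intro h; exact ⟨m, h, rfl⟩

/-- Bridge: `shuffleWord` in terms of `mergeN` on ℕ. -/
lemma shuffleWord_eq (hd : 1 ≤ d) {n₁ n₂ : ℕ} (u : Fin n₁ → Fin d) (v : Fin n₂ → Fin d)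
    (S : Finset (Fin (n₁ + n₂))) (hS : S.card = n₁) (m : Fin (n₁ + n₂)) :
    shuffleWord u v S hS m = mergeN (pad hd u) (pad hd v) (S.image Fin.val) m.1 := by
  unfold shuffleWord mergeN
  by_cases hm : m ∈ S
  · rw [dif_pos hm, if_pos ((mem_image_val S m).mpr hm)]
    have h1 := orderIso_val S hS m hm
    have h2 : cnt (S.image Fin.val) m.1 < n₁ := by
      rw [← h1]; exact ((S.orderIsoOfFin hS).symm ⟨m, hm⟩).2
    rw [pad, dif_pos h2]
    congr 1
    exact Fin.ext h1
  · rw [dif_neg hm, if_neg (fun h => hm ((mem_image_val S m).mp h))]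
    have hSc : (Sᶜ : Finset (Fin (n₁+n₂))).card = n₂ := by
      rw [Finset.card_compl, hS, Fintype.card_fin]; omega
    have h1 := orderIso_val (Sᶜ) (by rw [Finset.card_compl, hS, Fintype.card_fin]; omega : (Sᶜ:Finset (Fin (n₁+n₂))).card = n₂) m (Finset.mem_compl.mpr hm)
    rw [cnt_compl_image] at h1
    have h2 : m.1 - cnt (S.image Fin.val) m.1 < n₂ := by
      rw [← h1]; exact ((Sᶜ.orderIsoOfFin _).symm ⟨m, Finset.mem_compl.mpr hm⟩).2
    rw [pad, dif_pos h2]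
    congr 1
    exact Fin.ext h1


section chsec
variable (χ : ℝ → (n : ℕ) → (Fin n → Fin d) → ℝ)

def ch (t : ℝ) (m : ℕ) (y : ℕ → Fin d) : ℝ := χ t m (fun j => y j.1)

lemma ch_congr {t : ℝ} {m m' : ℕ} {y y' : ℕ → Fin d} (h : m = m')
    (hy : ∀ j < m', y j = y' j) : ch χ t m y = ch χ t m' y' := by
  subst h
  exact congrArg (χ t m) (funext fun j => hy j.1 j.2)

lemma ch_zero (hempty : ∀ t : ℝ, χ t 0 (fun i => i.elim0) = 1) (t : ℝ) (y : ℕ → Fin d) :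
    ch χ t 0 y = 1 := by
  rw [ch, show (fun j : Fin 0 => y j.1) = (fun i : Fin 0 => i.elim0) from funext fun j => j.elim0]
  exact hempty t

/-- lift a `Finset ℕ` to `Finset (Fin N)` -/
def liftSet (N : ℕ) (A : Finset ℕ) : Finset (Fin N) :=
  Finset.univ.filter (fun x => x.1 ∈ A)

lemma image_liftSet {N : ℕ} {A : Finset ℕ} (hA : A ⊆ Finset.range N) :
    (liftSet N A).image Fin.val = A := by
  ext a
  simp only [liftSet, mem_image, mem_filter, mem_univ, true_and]
  constructor
  · rintro ⟨x, hx, rfl⟩; exact hx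
  · intro ha; exact ⟨⟨a, by simpa using hA ha⟩, ha, rfl⟩

lemma liftSet_image {N : ℕ} (S : Finset (Fin N)) : liftSet N (S.image Fin.val) = S := by
  ext x
  simp only [liftSet, mem_filter, mem_univ, true_and, mem_image_val]

lemma card_liftSet {N : ℕ} {A : Finset ℕ} (hA : A ⊆ Finset.range N) :
    (liftSet N A).card = A.card := by
  conv_rhs => rw [← image_liftSet hA]
  rw [Finset.card_image_of_injective _ Fin.val_injective]

/-- reindex subtype sums to `powersetCard` sums -/
lemma sum_subtype_eq (p q : ℕ) (f : Finset ℕ → ℝ) :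
    (∑ S : {S : Finset (Fin (p + q)) // S.card = p}, f (S.1.image Fin.val)) =
    ∑ A ∈ (Finset.range (p + q)).powersetCard p, f A := by
  classical
  refine Finset.sum_bij' (i := fun (S : {S : Finset (Fin (p+q)) // S.card = p}) _ => S.1.image Fin.val)
    (j := fun A hA => (⟨liftSet (p+q) A, by
      rw [Finset.mem_powersetCard] at hA
      rw [card_liftSet hA.1]; exact hA.2⟩ : {S : Finset (Fin (p+q)) // S.card = p}))
    ?_ ?_ ?_ ?_ ?_
  · intro S _
    simp only [Finset.mem_powersetCard]
    constructor
    · intro x hx; simp only [mem_image] at hx; obtain ⟨y, _, rfl⟩ := hx; simp [y.2]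
    · rw [Finset.card_image_of_injective _ Fin.val_injective]; exact S.2
  · intro A _; exact Finset.mem_univ _
  · intro S _
    exact Subtype.ext (liftSet_image S.1)
  · intro A hA
    rw [Finset.mem_powersetCard] at hA
    exact image_liftSet hA.1
  · intro S _; rfl

/-- normalized shuffle property over ℕ words -/
lemma hshuf (hd : 1 ≤ d)
    (hshuffle : ∀ (t : ℝ) (n₁ n₂ : ℕ) (u : Fin n₁ → Fin d) (v : Fin n₂ → Fin d),
      χ t n₁ u * χ t n₂ v = ∑ S : {S : Finset (Fin (n₁ + n₂)) // S.card = n₁},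
        χ t (n₁ + n₂) (shuffleWord u v S.1 S.2))
    (t : ℝ) (p q : ℕ) (y₁ y₂ : ℕ → Fin d) :
    ch χ t p y₁ * ch χ t q y₂ =
      ∑ A ∈ (Finset.range (p + q)).powersetCard p, ch χ t (p + q) (mergeN y₁ y₂ A) := by
  classical
  have h := hshuffle t p q (fun j => y₁ j.1) (fun j => y₂ j.1)
  rw [ch, ch]
  rw [h]
  rw [← sum_subtype_eq p q (fun A => ch χ t (p+q) (mergeN y₁ y₂ A))]
  apply Finset.sum_congr rfl
  intro S _
  rw [ch]
  apply congrArg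
  funext m
  rw [shuffleWord_eq hd]
  -- mergeN (pad y₁') (pad y₂') (image) m.1 = mergeN y₁ y₂ (image) m.1
  have hsub : S.1.image Fin.val ⊆ Finset.range (p+q) := by
    intro x hx; simp only [mem_image] at hx; obtain ⟨y, _, rfl⟩ := hx; simp [y.2]
  rw [mergeN, mergeN]
  by_cases hm : m.1 ∈ S.1.image Fin.val
  · rw [if_pos hm, if_pos hm, pad]
    have : cnt (S.1.image Fin.val) m.1 < p := by
      have := cnt_lt_card hm
      rwa [Finset.card_image_of_injective _ Fin.val_injective, S.2] at this
    rw [dif_pos this]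
  · rw [if_neg hm, if_neg hm, pad]
    have : m.1 - cnt (S.1.image Fin.val) m.1 < q := by
      have := sub_cnt_lt hsub m.2 hm
      rwa [Finset.card_image_of_injective _ Fin.val_injective, S.2,
        show p + q - p = q by omega] at this
    rw [dif_pos this]

lemma hshuf_split (hd : 1 ≤ d)
    (hshuffle : ∀ (t : ℝ) (n₁ n₂ : ℕ) (u : Fin n₁ → Fin d) (v : Fin n₂ → Fin d),
      χ t n₁ u * χ t n₂ v = ∑ S : {S : Finset (Fin (n₁ + n₂)) // S.card = n₁},
        χ t (n₁ + n₂) (shuffleWord u v S.1 S.2))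
    (t : ℝ) {k m : ℕ} (hk : k ≤ m) (y₁ y₂ : ℕ → Fin d) :
    ch χ t k y₁ * ch χ t (m - k) y₂ =
      ∑ A ∈ (Finset.range m).powersetCard k, ch χ t m (mergeN y₁ y₂ A) := by
  have h := hshuf χ hd hshuffle t k (m - k) y₁ y₂
  rwa [show k + (m - k) = m by omega] at h

/-- the antipode cancellation -/
lemma antip
    (HS : ∀ (t : ℝ) {k m : ℕ}, k ≤ m → ∀ (y₁ y₂ : ℕ → Fin d),
      ch χ t k y₁ * ch χ t (m - k) y₂ =
        ∑ A ∈ (Finset.range m).powersetCard k, ch χ t m (mergeN y₁ y₂ A))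
    (t : ℝ) {m : ℕ} (hm : 1 ≤ m) (y : ℕ → Fin d) :
    ∑ k ∈ Finset.range (m + 1), (-1 : ℝ) ^ k *
      (ch χ t k (fun j => y (k - 1 - j)) * ch χ t (m - k) (fun j => y (k + j))) = 0 := by
  classical
  have step1 : ∀ k ∈ Finset.range (m + 1), (-1 : ℝ) ^ k *
      (ch χ t k (fun j => y (k - 1 - j)) * ch χ t (m - k) (fun j => y (k + j))) =
      ∑ A ∈ (Finset.range m).powersetCard k, (-1 : ℝ) ^ A.card * ch χ t m (Vy y A) := by
    intro k hk
    rw [Finset.mem_range] at hk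
    rw [HS t (by omega : k ≤ m), Finset.mul_sum]
    apply Finset.sum_congr rfl
    intro A hA
    rw [Finset.mem_powersetCard] at hA
    rw [hA.2]
    congr 1
    apply congrArg
    funext p
    rw [mergeN, Vy, hA.2]
  rw [Finset.sum_congr rfl step1]
  rw [show m + 1 = (Finset.range m).card + 1 by rw [Finset.card_range]]
  rw [← Finset.sum_powerset]
  apply Finset.sum_involution (g := fun A _ => if 0 ∈ A then A.erase 0 else insert 0 A)
  · intro A ha
    by_cases h : 0 ∈ A
    · simp only [if_pos h]
      have h0 : 0 ∉ A.erase 0 := Finset.notMem_erase _ _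
      have hV : Vy y A = Vy y (A.erase 0) := by
        conv_lhs => rw [← Finset.insert_erase h]
        exact Vy_insert h0
      rw [hV, Finset.card_erase_of_mem h]
      have hcard : 1 ≤ A.card := Finset.card_pos.mpr ⟨0, h⟩
      obtain ⟨c, hc⟩ : ∃ c, A.card = c + 1 := ⟨A.card - 1, by omega⟩
      rw [hc, Nat.add_sub_cancel, pow_succ]
      ring
    · simp only [if_neg h]
      rw [Vy_insert h, Finset.card_insert_of_notMem h, pow_succ]
      ring
  · intro A ha hne
    by_cases h0 : 0 ∈ A
    · simp only [if_pos h0]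
      intro heq
      have := Finset.notMem_erase 0 A
      rw [heq] at this
      exact this h0
    · simp only [if_neg h0]
      intro heq
      rw [← heq] at h0
      exact h0 (Finset.mem_insert_self _ _)
  · intro A ha
    by_cases h0 : 0 ∈ A
    · simp [h0, Finset.insert_erase h0, Finset.notMem_erase]
    · simp [h0, Finset.erase_insert h0]
  · intro A ha
    rw [Finset.mem_powerset] at ha
    by_cases h0 : 0 ∈ A
    · simp only [if_pos h0]
      rw [Finset.mem_powerset]
      exact (Finset.erase_subset _ _).trans ha
    · simp only [if_neg h0]
      rw [Finset.mem_powerset]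
      intro x hx
      rcases Finset.mem_insert.mp hx with rfl | hx
      · rw [Finset.mem_range]; omega
      · exact ha hx
lemma X_eq (hd : 1 ≤ d) (X : (n : ℕ) → (Fin n → Fin d) → ℝ → ℝ → ℝ)
    (hX : ∀ (n : ℕ) (w : Fin n → Fin d) (t s : ℝ),
      X n w t s = ∑ k : Fin (n + 1), (-1 : ℝ) ^ (n - k.1) *
        (χ t k.1 (fun j => w ⟨j.1, by have h1 := j.isLt; have h2 := k.isLt; exact @id (j.1 < n + 0) (by omega)⟩) *
          χ s (n - k.1) (fun j => w ⟨n - 1 - j.1, by have h1 := j.isLt; exact @id (n - 1 - j.1 < n + 0) (by omega)⟩)))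
    (n : ℕ) (w : Fin n → Fin d) (t s : ℝ) :
    X n w t s = ∑ k ∈ Finset.range (n + 1), (-1 : ℝ) ^ (n - k) *
      (ch χ t k (pad hd w) * ch χ s (n - k) (fun j => pad hd w (n - 1 - j))) := by
  rw [hX]
  rw [← Fin.sum_univ_eq_sum_range (fun k => (-1 : ℝ) ^ (n - k) *
      (ch χ t k (pad hd w) * ch χ s (n - k) (fun j => pad hd w (n - 1 - j)))) (n + 1)]
  apply Finset.sum_congr rfl
  intro k _
  congr 1
  congr 1
  · rw [ch]
    apply congrArg
    funext j
    have h1 := j.isLt; have h2 := k.isLt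
    rw [pad, dif_pos (show j.1 < n by omega)]
  · rw [ch]
    apply congrArg
    funext j
    have h1 := j.isLt
    rw [pad, dif_pos (show n - 1 - j.1 < n by omega)]

lemma antip'
    (AP : ∀ (t : ℝ) {m : ℕ}, 1 ≤ m → ∀ (y : ℕ → Fin d),
      ∑ k ∈ Finset.range (m + 1), (-1 : ℝ) ^ k *
        (ch χ t k (fun j => y (k - 1 - j)) * ch χ t (m - k) (fun j => y (k + j))) = 0)
    (hempty : ∀ t : ℝ, χ t 0 (fun i => i.elim0) = 1)
    (t : ℝ) (a b : ℕ) (hab : a ≤ b) (y : ℕ → Fin d) :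
    ∑ k ∈ Finset.Icc a b, (-1 : ℝ) ^ (k - a) *
      (ch χ t (k - a) (fun j => y (k - 1 - j)) * ch χ t (b - k) (fun j => y (k + j))) =
      if a = b then 1 else 0 := by
  rcases eq_or_lt_of_le hab with rfl | hlt
  · rw [if_pos rfl, Finset.Icc_self, Finset.sum_singleton, Nat.sub_self,
      ch_zero χ hempty, ch_zero χ hempty]
    norm_num
  · rw [if_neg (by omega)]
    rw [← Finset.Ico_add_one_right_eq_Icc, Finset.sum_Ico_eq_sum_range]
    rw [show b + 1 - a = (b - a) + 1 by omega]
    rw [← AP t (show 1 ≤ b - a by omega) (fun i => y (a + i))]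
    apply Finset.sum_congr rfl
    intro i hi
    rw [Finset.mem_range] at hi
    rw [Nat.add_sub_cancel_left]
    congr 1
    congr 1
    · apply ch_congr χ rfl
      intro j hj
      congr 1
      omega
    · apply ch_congr χ (by omega)
      intro j hj
      congr 1
      omega

lemma chen (hd : 1 ≤ d) (X : (n : ℕ) → (Fin n → Fin d) → ℝ → ℝ → ℝ)
    (hX : ∀ (n : ℕ) (w : Fin n → Fin d) (t s : ℝ),
      X n w t s = ∑ k : Fin (n + 1), (-1 : ℝ) ^ (n - k.1) *
        (χ t k.1 (fun j => w ⟨j.1, by have h1 := j.isLt; have h2 := k.isLt; exact @id (j.1 < n + 0) (by omega)⟩) *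
          χ s (n - k.1) (fun j => w ⟨n - 1 - j.1, by have h1 := j.isLt; exact @id (n - 1 - j.1 < n + 0) (by omega)⟩)))
    (hempty : ∀ t : ℝ, χ t 0 (fun i => i.elim0) = 1)
    (AP : ∀ (t : ℝ) {m : ℕ}, 1 ≤ m → ∀ (y : ℕ → Fin d),
      ∑ k ∈ Finset.range (m + 1), (-1 : ℝ) ^ k *
        (ch χ t k (fun j => y (k - 1 - j)) * ch χ t (m - k) (fun j => y (k + j))) = 0)
    (n : ℕ) (hn : 2 ≤ n) (w : Fin n → Fin d) (t u s : ℝ) :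
    X n w t s = X n w t u + X n w u s +
      ∑ k ∈ Finset.univ.filter (fun k : Fin n => 0 < k.1),
        X k.1 (fun j => w ⟨j.1, by have h1 := j.isLt; have h2 := k.isLt; exact @id (j.1 < n + 0) (by omega)⟩) t u *
          X (n - k.1)
            (fun j => w ⟨k.1 + j.1, by have h1 := j.isLt; have h2 := k.isLt; exact @id (k.1 + j.1 < n + 0) (by omega)⟩) u s := by
  classical
  set w' : ℕ → Fin d := pad hd w with hw'def
  set g : ℕ → ℝ := fun k =>
    (∑ a ∈ Finset.range (k + 1), (-1 : ℝ) ^ (k - a) *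
      (ch χ t a w' * ch χ u (k - a) (fun j => w' (k - 1 - j)))) *
    (∑ b ∈ Finset.Icc k n, (-1 : ℝ) ^ (n - b) *
      (ch χ u (b - k) (fun j => w' (k + j)) * ch χ s (n - b) (fun j => w' (n - 1 - j))))
    with hgdef
  have hg0 : g 0 = X n w u s := by
    simp only [hgdef]
    rw [Finset.sum_range_one]
    rw [ch_zero χ hempty, ch_zero χ hempty]
    rw [X_eq χ hd X hX, ← hw'def]
    rw [show Finset.Icc 0 n = Finset.range (n+1) by ext x; simp]
    norm_num
  have hgn : g n = X n w t u := by
    simp only [hgdef]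
    rw [Finset.Icc_self, Finset.sum_singleton, Nat.sub_self, ch_zero χ hempty,
      ch_zero χ hempty]
    rw [X_eq χ hd X hX, ← hw'def]
    norm_num
  have hmid : ∀ k, 1 ≤ k → k ≤ n - 1 →
      X k (fun j : Fin k => w' j.1) t u * X (n - k) (fun j : Fin (n - k) => w' (k + j.1)) u s
        = g k := by
    intro k hk1 hk2
    simp only [hgdef]
    congr 1
    · rw [X_eq χ hd X hX]
      apply Finset.sum_congr rfl
      intro a ha
      rw [Finset.mem_range] at ha
      congr 1
      congr 1
      · apply ch_congr χ rfl
        intro j hj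
        rw [pad, dif_pos (show j < k by omega)]
      · apply ch_congr χ rfl
        intro j hj
        rw [pad, dif_pos (show k - 1 - j < k by omega)]
    · rw [X_eq χ hd X hX]
      rw [← Finset.Ico_add_one_right_eq_Icc, Finset.sum_Ico_eq_sum_range]
      rw [show n + 1 - k = (n - k) + 1 by omega]
      apply Finset.sum_congr rfl
      intro c hc
      rw [Finset.mem_range] at hc
      rw [show n - (k + c) = n - k - c by omega, Nat.add_sub_cancel_left]
      congr 1
      congr 1
      · apply ch_congr χ rfl
        intro j hj
        rw [pad, dif_pos (show j < n - k by omega)]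
      · apply ch_congr χ rfl
        intro j hj
        rw [pad, dif_pos (show n - k - 1 - j < n - k by omega)]
        show w' (k + (n - k - 1 - j)) = w' (n - 1 - j)
        congr 1
        omega
  have hconv : (∑ k ∈ Finset.univ.filter (fun k : Fin n => 0 < k.1),
      X k.1 (fun j => w ⟨j.1, by have h1 := j.isLt; have h2 := k.isLt; exact @id (j.1 < n + 0) (by omega)⟩) t u *
        X (n - k.1)
          (fun j => w ⟨k.1 + j.1, by have h1 := j.isLt; have h2 := k.isLt; exact @id (k.1 + j.1 < n + 0) (by omega)⟩) u s)
      = ∑ k ∈ Finset.Ico 1 n, g k := by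
    refine Finset.sum_bij' (i := fun (k : Fin n) _ => (k : ℕ))
      (j := fun m hm => (⟨m, by rw [Finset.mem_Ico] at hm; omega⟩ : Fin n)) ?_ ?_ ?_ ?_ ?_
    · intro k hk
      rw [Finset.mem_filter] at hk
      rw [Finset.mem_Ico]
      exact ⟨hk.2, k.isLt⟩
    · intro m hm
      rw [Finset.mem_filter]
      rw [Finset.mem_Ico] at hm
      exact ⟨Finset.mem_univ _, hm.1⟩
    · intro k _
      exact Fin.ext rfl
    · intro m _
      rfl
    · intro k hk
      rw [Finset.mem_filter] at hk
      rw [← hmid k.1 hk.2 (by have := k.isLt; omega)]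
      refine congrArg₂ (· * ·) ?_ ?_
      · apply congrArg (fun f => X (k : ℕ) f t u)
        funext j
        rw [hw'def]
        rw [pad, dif_pos (show j.1 < n by have := j.isLt; have := k.isLt; omega)]
      · apply congrArg (fun f => X (n - (k : ℕ)) f u s)
        funext j
        rw [hw'def]
        rw [pad, dif_pos (show (k : ℕ) + j.1 < n by have := j.isLt; have := k.isLt; omega)]
  rw [hconv]
  rw [show X n w t u = g n from hgn.symm, show X n w u s = g 0 from hg0.symm]
  have hsplit : ∑ k ∈ Finset.range (n + 1), g k
      = g n + g 0 + ∑ k ∈ Finset.Ico 1 n, g k := by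
    rw [Finset.sum_range_succ, Finset.range_eq_Ico,
      Finset.sum_eq_sum_Ico_succ_bot (show 0 < n by omega)]
    ring
  rw [← hsplit]
  -- main computation
  have ext_a : ∀ k ∈ Finset.range (n+1),
      (∑ a ∈ Finset.range (k + 1), (-1 : ℝ) ^ (k - a) *
        (ch χ t a w' * ch χ u (k - a) (fun j => w' (k - 1 - j))))
      = ∑ a ∈ Finset.range (n + 1), if a ≤ k then (-1 : ℝ) ^ (k - a) *
        (ch χ t a w' * ch χ u (k - a) (fun j => w' (k - 1 - j))) else 0 := by
    intro k hk
    rw [Finset.mem_range] at hk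
    rw [← Finset.sum_filter]
    congr 1
    ext x; simp; omega
  have ext_b : ∀ k : ℕ,
      (∑ b ∈ Finset.Icc k n, (-1 : ℝ) ^ (n - b) *
        (ch χ u (b - k) (fun j => w' (k + j)) * ch χ s (n - b) (fun j => w' (n - 1 - j))))
      = ∑ b ∈ Finset.range (n + 1), if k ≤ b then (-1 : ℝ) ^ (n - b) *
        (ch χ u (b - k) (fun j => w' (k + j)) * ch χ s (n - b) (fun j => w' (n - 1 - j)))
        else 0 := by
    intro k
    rw [← Finset.sum_filter]
    congr 1
    ext x; simp; omega
  have main : ∑ k ∈ Finset.range (n + 1), g k = X n w t s := by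
    calc ∑ k ∈ Finset.range (n + 1), g k
        = ∑ k ∈ Finset.range (n + 1), ∑ a ∈ Finset.range (n + 1), ∑ b ∈ Finset.range (n + 1),
            (if a ≤ k then (-1 : ℝ) ^ (k - a) *
              (ch χ t a w' * ch χ u (k - a) (fun j => w' (k - 1 - j))) else 0) *
            (if k ≤ b then (-1 : ℝ) ^ (n - b) *
              (ch χ u (b - k) (fun j => w' (k + j)) * ch χ s (n - b) (fun j => w' (n - 1 - j)))
              else 0) := by
          apply Finset.sum_congr rfl
          intro k hk
          simp only [hgdef]
          rw [ext_a k hk, ext_b k, Finset.sum_mul]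
          apply Finset.sum_congr rfl
          intro a _
          rw [Finset.mul_sum]
      _ = ∑ a ∈ Finset.range (n + 1), ∑ b ∈ Finset.range (n + 1),
            ((-1 : ℝ) ^ (n - b) * (ch χ t a w' * ch χ s (n - b) (fun j => w' (n - 1 - j)))) *
            (if a = b then 1 else 0) := by
          rw [Finset.sum_comm]
          apply Finset.sum_congr rfl
          intro a ha
          rw [Finset.sum_comm]
          apply Finset.sum_congr rfl
          intro b hb
          rw [Finset.mem_range] at ha hb
          have hcollapse : ∑ k ∈ Finset.range (n+1),
              (if a ≤ k then (-1 : ℝ) ^ (k - a) *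
                (ch χ t a w' * ch χ u (k - a) (fun j => w' (k - 1 - j))) else 0) *
              (if k ≤ b then (-1 : ℝ) ^ (n - b) *
                (ch χ u (b - k) (fun j => w' (k + j)) *
                  ch χ s (n - b) (fun j => w' (n - 1 - j))) else 0)
              = ∑ k ∈ Finset.Icc a b, ((-1 : ℝ) ^ (k - a) *
                (ch χ t a w' * ch χ u (k - a) (fun j => w' (k - 1 - j)))) *
                ((-1 : ℝ) ^ (n - b) *
                (ch χ u (b - k) (fun j => w' (k + j)) *
                  ch χ s (n - b) (fun j => w' (n - 1 - j)))) := by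
            rw [show Finset.Icc a b = (Finset.range (n+1)).filter (fun k => a ≤ k ∧ k ≤ b) by
              ext x; simp; omega]
            rw [Finset.sum_filter]
            apply Finset.sum_congr rfl
            intro k _
            by_cases h1 : a ≤ k
            · by_cases h2 : k ≤ b
              · rw [if_pos h1, if_pos h2, if_pos ⟨h1, h2⟩]
              · rw [if_neg (show ¬(a ≤ k ∧ k ≤ b) from fun h => h2 h.2), if_pos h1,
                  if_neg h2, mul_zero]
            · rw [if_neg (show ¬(a ≤ k ∧ k ≤ b) from fun h => h1 h.1), if_neg h1, zero_mul]
          rw [hcollapse]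
          by_cases hab : a ≤ b
          · have harr : ∀ k ∈ Finset.Icc a b, ((-1 : ℝ) ^ (k - a) *
                (ch χ t a w' * ch χ u (k - a) (fun j => w' (k - 1 - j)))) *
                ((-1 : ℝ) ^ (n - b) *
                (ch χ u (b - k) (fun j => w' (k + j)) *
                  ch χ s (n - b) (fun j => w' (n - 1 - j))))
                = (((-1 : ℝ) ^ (n - b) *
                    (ch χ t a w' * ch χ s (n - b) (fun j => w' (n - 1 - j))))) *
                  ((-1 : ℝ) ^ (k - a) *
                    (ch χ u (k - a) (fun j => w' (k - 1 - j)) *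
                     ch χ u (b - k) (fun j => w' (k + j)))) := by
              intro k _
              ring
            rw [Finset.sum_congr rfl harr, ← Finset.mul_sum]
            rw [antip' χ AP hempty u a b hab w']
          · rw [Finset.Icc_eq_empty (by omega), Finset.sum_empty, if_neg (by omega), mul_zero]
      _ = X n w t s := by
          rw [X_eq χ hd X hX, ← hw'def]
          apply Finset.sum_congr rfl
          intro a ha
          rw [Finset.sum_eq_single a]
          · rw [if_pos rfl, mul_one]
          · intro b _ hb
            rw [if_neg (fun h => hb h.symm), mul_zero]
          · intro h
            exact absurd ha h
  rw [main]
lemma shufprop (hd : 1 ≤ d) (X : (n : ℕ) → (Fin n → Fin d) → ℝ → ℝ → ℝ)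
    (hX : ∀ (n : ℕ) (w : Fin n → Fin d) (t s : ℝ),
      X n w t s = ∑ k : Fin (n + 1), (-1 : ℝ) ^ (n - k.1) *
        (χ t k.1 (fun j => w ⟨j.1, by have h1 := j.isLt; have h2 := k.isLt; exact @id (j.1 < n + 0) (by omega)⟩) *
          χ s (n - k.1) (fun j => w ⟨n - 1 - j.1, by have h1 := j.isLt; exact @id (n - 1 - j.1 < n + 0) (by omega)⟩)))
    (HS : ∀ (t : ℝ) (p q : ℕ) (y₁ y₂ : ℕ → Fin d),
      ch χ t p y₁ * ch χ t q y₂ =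
        ∑ A ∈ (Finset.range (p + q)).powersetCard p, ch χ t (p + q) (mergeN y₁ y₂ A))
    (n₁ n₂ : ℕ) (hn₁ : 1 ≤ n₁) (hn₂ : 1 ≤ n₂)
    (u : Fin n₁ → Fin d) (v : Fin n₂ → Fin d) (t s : ℝ) :
    X n₁ u t s * X n₂ v t s =
      ∑ S : {S : Finset (Fin (n₁ + n₂)) // S.card = n₁},
        X (n₁ + n₂) (shuffleWord u v S.1 S.2) t s := by
  classical
  set u' : ℕ → Fin d := pad hd u with hu'
  set v' : ℕ → Fin d := pad hd v with hv'
  set ru : ℕ → Fin d := fun j => u' (n₁ - 1 - j) with hru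
  set rv : ℕ → Fin d := fun j => v' (n₂ - 1 - j) with hrv
  set body : ℕ → ℕ → Finset ℕ → Finset ℕ → ℝ := fun a b P Q =>
    (-1 : ℝ) ^ (n₁ + n₂ - (a + b)) *
      (ch χ t (a + b) (mergeN u' v' P) *
        ch χ s (n₁ + n₂ - (a + b)) (mergeN ru rv Q)) with hbody
  set tgt : Finset ℕ → ℕ → ℝ := fun A k =>
    (-1 : ℝ) ^ (n₁ + n₂ - k) *
      (ch χ t k (mergeN u' v' A) *
        ch χ s (n₁ + n₂ - k) (fun j => mergeN u' v' A (n₁ + n₂ - 1 - j))) with htgt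
  -- Step 1 : LHS as a quadruple sum
  have hL : X n₁ u t s * X n₂ v t s =
      ∑ a ∈ Finset.range (n₁ + 1), ∑ b ∈ Finset.range (n₂ + 1),
        ∑ P ∈ (Finset.range (a + b)).powersetCard a,
          ∑ Q ∈ (Finset.range (n₁ + n₂ - (a + b))).powersetCard (n₁ - a),
            body a b P Q := by
    rw [X_eq χ hd X hX, X_eq χ hd X hX, ← hu', ← hv', Finset.sum_mul_sum]
    apply Finset.sum_congr rfl
    intro a ha
    apply Finset.sum_congr rfl
    intro b hb
    rw [Finset.mem_range] at ha hb
    have h1 := HS t a b u' v'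
    have h2 := HS s (n₁ - a) (n₂ - b) ru rv
    rw [show (n₁ - a) + (n₂ - b) = n₁ + n₂ - (a + b) by omega] at h2
    calc ((-1 : ℝ) ^ (n₁ - a) * (ch χ t a u' * ch χ s (n₁ - a) (fun j => u' (n₁ - 1 - j)))) *
          ((-1 : ℝ) ^ (n₂ - b) * (ch χ t b v' * ch χ s (n₂ - b) (fun j => v' (n₂ - 1 - j))))
        = ((-1 : ℝ) ^ (n₁ - a) * (-1 : ℝ) ^ (n₂ - b)) *
          ((ch χ t a u' * ch χ t b v') *
           (ch χ s (n₁ - a) ru * ch χ s (n₂ - b) rv)) := by rw [hru, hrv]; ring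
      _ = (-1 : ℝ) ^ (n₁ + n₂ - (a + b)) *
          ((∑ P ∈ (Finset.range (a + b)).powersetCard a, ch χ t (a + b) (mergeN u' v' P)) *
           (∑ Q ∈ (Finset.range (n₁ + n₂ - (a + b))).powersetCard (n₁ - a),
              ch χ s (n₁ + n₂ - (a + b)) (mergeN ru rv Q))) := by
          rw [← h1, ← h2, ← pow_add, show (n₁ - a) + (n₂ - b) = n₁ + n₂ - (a + b) by omega]
      _ = ∑ P ∈ (Finset.range (a + b)).powersetCard a,
            ∑ Q ∈ (Finset.range (n₁ + n₂ - (a + b))).powersetCard (n₁ - a),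
              body a b P Q := by
          rw [Finset.sum_mul_sum, Finset.mul_sum]
          apply Finset.sum_congr rfl
          intro P _
          rw [Finset.mul_sum]
  -- Step 2 : RHS as a double sum
  have hbr : ∀ (S : Finset (Fin (n₁ + n₂))) (hS : S.card = n₁) (i : ℕ), i < n₁ + n₂ →
      pad hd (shuffleWord u v S hS) i = mergeN u' v' (S.image Fin.val) i := by
    intro S hS i hi
    rw [pad, dif_pos hi, hu', hv']
    exact shuffleWord_eq hd u v S hS ⟨i, hi⟩
  have hR : (∑ S : {S : Finset (Fin (n₁ + n₂)) // S.card = n₁},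
      X (n₁ + n₂) (shuffleWord u v S.1 S.2) t s) =
      ∑ A ∈ (Finset.range (n₁ + n₂)).powersetCard n₁,
        ∑ k ∈ Finset.range (n₁ + n₂ + 1), tgt A k := by
    rw [← sum_subtype_eq (f := fun A => ∑ k ∈ Finset.range (n₁ + n₂ + 1), tgt A k)]
    apply Finset.sum_congr rfl
    intro S _
    rw [X_eq χ hd X hX]
    apply Finset.sum_congr rfl
    intro k hk
    rw [Finset.mem_range] at hk
    rw [htgt]
    congr 1
    congr 1
    · apply ch_congr χ rfl
      intro j hj
      exact hbr S.1 S.2 j (by omega)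
    · apply ch_congr χ rfl
      intro j hj
      exact hbr S.1 S.2 (n₁ + n₂ - 1 - j) (by omega)
  rw [hL, hR]
  -- Step 3 : flatten both sides into sigma sums
  have hinj : ∀ (B : Finset ℕ), (∀ x ∈ B, x < n₁ + n₂) →
      Set.InjOn (fun j => n₁ + n₂ - 1 - j) B := by
    intro B hB x hx y hy hxy
    have := hB x hx; have := hB y hy
    simp only at hxy
    omega
  have hdblrefl : ∀ (B : Finset ℕ), (∀ x ∈ B, x < n₁ + n₂) →
      (B.image (fun j => n₁ + n₂ - 1 - j)).image (fun j => n₁ + n₂ - 1 - j) = B := by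
    intro B hB
    rw [Finset.image_image]
    rw [show ((fun j => n₁ + n₂ - 1 - j) ∘ (fun j => n₁ + n₂ - 1 - j)) = fun j : ℕ => n₁ + n₂ - 1 - (n₁ + n₂ - 1 - j) from rfl]
    calc B.image (fun j => n₁ + n₂ - 1 - (n₁ + n₂ - 1 - j)) = B.image id := by
          apply Finset.image_congr
          intro x hx
          have := hB x hx
          simp only [id]
          omega
      _ = B := Finset.image_id
  have flatL : (∑ a ∈ Finset.range (n₁ + 1), ∑ b ∈ Finset.range (n₂ + 1),
      ∑ P ∈ (Finset.range (a + b)).powersetCard a,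
        ∑ Q ∈ (Finset.range (n₁ + n₂ - (a + b))).powersetCard (n₁ - a), body a b P Q)
      = ∑ x ∈ (Finset.range (n₁ + 1)).sigma (fun a => (Finset.range (n₂ + 1)).sigma
          (fun b => ((Finset.range (a + b)).powersetCard a).sigma
            (fun _ => (Finset.range (n₁ + n₂ - (a + b))).powersetCard (n₁ - a)))),
          body x.1 x.2.1 x.2.2.1 x.2.2.2 := by
    rw [Finset.sum_sigma]
    apply Finset.sum_congr rfl
    intro a _
    rw [Finset.sum_sigma]
    apply Finset.sum_congr rfl
    intro b _
    rw [Finset.sum_sigma]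
  have flatR : (∑ A ∈ (Finset.range (n₁ + n₂)).powersetCard n₁,
      ∑ k ∈ Finset.range (n₁ + n₂ + 1), tgt A k)
      = ∑ y ∈ ((Finset.range (n₁ + n₂)).powersetCard n₁).sigma
          (fun _ => Finset.range (n₁ + n₂ + 1)), tgt y.1 y.2 := by
    rw [Finset.sum_sigma]
  rw [flatL, flatR]
  refine Finset.sum_nbij'
    (i := fun x => (⟨x.2.2.1 ∪ x.2.2.2.image (fun j => n₁ + n₂ - 1 - j), x.1 + x.2.1⟩ :
      (_ : Finset ℕ) × ℕ))
    (j := fun y => (⟨cnt y.1 y.2, y.2 - cnt y.1 y.2, y.1.filter (· < y.2),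
      (y.1.filter (fun m => y.2 ≤ m)).image (fun m => n₁ + n₂ - 1 - m)⟩ :
      (_ : ℕ) × (_ : ℕ) × (_ : Finset ℕ) × Finset ℕ))
    ?_ ?_ ?_ ?_ ?_
  · -- maps into target
    rintro ⟨a, b, P, Q⟩ hx
    simp only [Finset.mem_sigma, Finset.mem_range, Finset.mem_powersetCard] at hx
    obtain ⟨ha, hb, ⟨hP, hPc⟩, hQ, hQc⟩ := hx
    have hPlt : ∀ x ∈ P, x < a + b := fun x hx => Finset.mem_range.mp (hP hx)
    have hQlt : ∀ x ∈ Q, x < n₁ + n₂ - (a + b) := fun x hx => Finset.mem_range.mp (hQ hx)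
    have hdisj : Disjoint P (Q.image (fun j => n₁ + n₂ - 1 - j)) := by
      rw [Finset.disjoint_left]
      intro m hmP hmI
      simp only [Finset.mem_image] at hmI
      obtain ⟨j, hj, rfl⟩ := hmI
      have := hQlt j hj
      have := hPlt _ hmP
      omega
    simp only [Finset.mem_sigma, Finset.mem_range, Finset.mem_powersetCard]
    refine ⟨⟨?_, ?_⟩, ?_⟩
    · intro x hx
      simp only [Finset.mem_union, Finset.mem_image] at hx
      rw [Finset.mem_range]
      rcases hx with h | ⟨j, hj, rfl⟩
      · have := hPlt x h; omega
      · have := hQlt j hj; omega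
    · rw [Finset.card_union_of_disjoint hdisj,
        Finset.card_image_of_injOn (hinj Q (fun x hx => by have := hQlt x hx; omega)), hPc, hQc]
      omega
    · omega
  · -- maps back into source
    rintro ⟨A, k⟩ hy
    simp only [Finset.mem_sigma, Finset.mem_range, Finset.mem_powersetCard] at hy
    obtain ⟨⟨hA, hAc⟩, hk⟩ := hy
    have hAlt : ∀ x ∈ A, x < n₁ + n₂ := fun x hx => Finset.mem_range.mp (hA hx)
    have hcle := cnt_le A k
    have hclec := cnt_le_card A k
    have hcompl : k - cnt A k ≤ n₂ := by
      have h1 := cnt_add_compl hA (show k ≤ n₁ + n₂ by omega)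
      have h2 := cnt_le_card (Finset.range (n₁ + n₂) \ A) k
      rw [Finset.card_sdiff_of_subset hA, Finset.card_range, hAc] at h2
      omega
    have hpart : cnt A k + (A.filter (fun m => k ≤ m)).card = n₁ := by
      have := Finset.card_filter_add_card_filter_not (s := A) (p := (· < k))
      rw [hAc] at this
      rw [show A.filter (fun m => k ≤ m) = A.filter (fun m => ¬ m < k) by
        apply Finset.filter_congr; intro x _; simp [Nat.not_lt]]
      exact this
    simp only [Finset.mem_sigma, Finset.mem_range, Finset.mem_powersetCard]
    refine ⟨by rw [hAc] at hclec; omega, by omega, ⟨?_, rfl⟩, ?_, ?_⟩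
    · intro x hx
      rw [Finset.mem_filter] at hx
      rw [Finset.mem_range]
      omega
    · intro x hx
      simp only [Finset.mem_image, Finset.mem_filter] at hx
      obtain ⟨m, ⟨hmA, hmk⟩, rfl⟩ := hx
      rw [Finset.mem_range]
      have := hAlt m hmA
      omega
    · rw [Finset.card_image_of_injOn (hinj _ (fun x hx => hAlt x (Finset.mem_of_mem_filter _ hx)))]
      omega
  · -- left inverse
    rintro ⟨a, b, P, Q⟩ hx
    simp only [Finset.mem_sigma, Finset.mem_range, Finset.mem_powersetCard] at hx
    obtain ⟨ha, hb, ⟨hP, hPc⟩, hQ, hQc⟩ := hx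
    have hPlt : ∀ x ∈ P, x < a + b := fun x hx => Finset.mem_range.mp (hP hx)
    have hQlt : ∀ x ∈ Q, x < n₁ + n₂ - (a + b) := fun x hx => Finset.mem_range.mp (hQ hx)
    have hfilt : (P ∪ Q.image (fun j => n₁ + n₂ - 1 - j)).filter (· < a + b) = P := by
      ext x
      simp only [Finset.mem_filter, Finset.mem_union, Finset.mem_image]
      constructor
      · rintro ⟨h | ⟨j, hj, rfl⟩, hx⟩
        · exact h
        · have := hQlt j hj; omega
      · intro h
        exact ⟨Or.inl h, hPlt x h⟩
    have hcnt : cnt (P ∪ Q.image (fun j => n₁ + n₂ - 1 - j)) (a + b) = a := by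
      rw [cnt, hfilt, hPc]
    have hfilt2 : (P ∪ Q.image (fun j => n₁ + n₂ - 1 - j)).filter (fun m => a + b ≤ m)
        = Q.image (fun j => n₁ + n₂ - 1 - j) := by
      ext x
      simp only [Finset.mem_filter, Finset.mem_union, Finset.mem_image]
      constructor
      · rintro ⟨h | h, hx⟩
        · have := hPlt x h; omega
        · exact h
      · rintro ⟨j, hj, rfl⟩
        have := hQlt j hj
        exact ⟨Or.inr ⟨j, hj, rfl⟩, by omega⟩
    simp only [Sigma.mk.inj_iff, heq_eq_eq]
    refine ⟨hcnt, by rw [hcnt]; omega, hfilt, ?_⟩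
    rw [hfilt2, hdblrefl Q (fun x hx => by have := hQlt x hx; omega)]
  · -- right inverse
    rintro ⟨A, k⟩ hy
    simp only [Finset.mem_sigma, Finset.mem_range, Finset.mem_powersetCard] at hy
    obtain ⟨⟨hA, hAc⟩, hk⟩ := hy
    have hAlt : ∀ x ∈ A, x < n₁ + n₂ := fun x hx => Finset.mem_range.mp (hA hx)
    have hcle := cnt_le A k
    simp only [Sigma.mk.inj_iff, heq_eq_eq]
    constructor
    · rw [hdblrefl (A.filter (fun m => k ≤ m))
        (fun x hx => hAlt x (Finset.mem_of_mem_filter _ hx))]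
      rw [show A.filter (fun m => k ≤ m) = A.filter (fun m => ¬ m < k) by
        apply Finset.filter_congr; intro x _; simp [Nat.not_lt]]
      exact Finset.filter_union_filter_not_eq _ A
    · omega
  · -- summand equality
    rintro ⟨a, b, P, Q⟩ hx
    simp only [Finset.mem_sigma, Finset.mem_range, Finset.mem_powersetCard] at hx
    obtain ⟨ha, hb, ⟨hP, hPc⟩, hQ, hQc⟩ := hx
    have hPlt : ∀ x ∈ P, x < a + b := fun x hx => Finset.mem_range.mp (hP hx)
    have hQlt : ∀ x ∈ Q, x < n₁ + n₂ - (a + b) := fun x hx => Finset.mem_range.mp (hQ hx)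
    set A : Finset ℕ := P ∪ Q.image (fun j => n₁ + n₂ - 1 - j) with hAdef
    have hdisj : Disjoint P (Q.image (fun j => n₁ + n₂ - 1 - j)) := by
      rw [Finset.disjoint_left]
      intro m hmP hmI
      simp only [Finset.mem_image] at hmI
      obtain ⟨j, hj, rfl⟩ := hmI
      have := hQlt j hj
      have := hPlt _ hmP
      omega
    show body a b P Q = tgt A (a + b)
    rw [hbody, htgt]
    dsimp only
    congr 1
    congr 1
    · -- prefix part
      apply ch_congr χ rfl
      intro m hm
      have hmem : m ∈ A ↔ m ∈ P := by
        rw [hAdef]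
        simp only [Finset.mem_union, Finset.mem_image]
        constructor
        · rintro (h | ⟨j, hj, rfl⟩)
          · exact h
          · have := hQlt j hj; omega
        · exact Or.inl
      have hcnt : cnt A m = cnt P m := by
        rw [cnt, cnt]
        congr 1
        ext x
        simp only [hAdef, Finset.mem_filter, Finset.mem_union, Finset.mem_image]
        constructor
        · rintro ⟨h | ⟨j, hj, rfl⟩, hx⟩
          · exact ⟨h, hx⟩
          · have := hQlt j hj; omega
        · rintro ⟨h, hx⟩
          exact ⟨Or.inl h, hx⟩
      rw [mergeN, mergeN, hcnt]
      by_cases hmP : m ∈ P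
      · rw [if_pos hmP, if_pos (hmem.mpr hmP)]
      · rw [if_neg hmP, if_neg (fun h => hmP (hmem.mp h))]
    · -- suffix (reflected) part
      apply ch_congr χ rfl
      intro j hj
      have hmem : n₁ + n₂ - 1 - j ∈ A ↔ j ∈ Q := by
        rw [hAdef]
        simp only [Finset.mem_union, Finset.mem_image]
        constructor
        · rintro (h | ⟨j', hj', hj'e⟩)
          · have := hPlt _ h; omega
          · have := hQlt j' hj'
            have : j' = j := by omega
            rwa [← this]
        · intro h
          exact Or.inr ⟨j, h, rfl⟩
      have hfiltA : A.filter (· < n₁ + n₂ - 1 - j)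
          = P ∪ (Q.filter (fun x => j < x)).image (fun j => n₁ + n₂ - 1 - j) := by
        ext x
        simp only [hAdef, Finset.mem_filter, Finset.mem_union, Finset.mem_image]
        constructor
        · rintro ⟨h | ⟨j', hj', rfl⟩, hx⟩
          · exact Or.inl h
          · have := hQlt j' hj'
            exact Or.inr ⟨j', ⟨hj', by omega⟩, rfl⟩
        · rintro (h | ⟨j', ⟨hj', hjj'⟩, rfl⟩)
          · have := hPlt x h
            exact ⟨Or.inl h, by omega⟩
          · have := hQlt j' hj'
            exact ⟨Or.inr ⟨j', hj', rfl⟩, by omega⟩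
      have hdisj2 : Disjoint P ((Q.filter (fun x => j < x)).image (fun j => n₁ + n₂ - 1 - j)) :=
        Finset.disjoint_of_subset_right
          (Finset.image_subset_image (Finset.filter_subset _ _)) hdisj
      have hcntA : cnt A (n₁ + n₂ - 1 - j) = a + (Q.filter (fun x => j < x)).card := by
        rw [cnt, hfiltA, Finset.card_union_of_disjoint hdisj2,
          Finset.card_image_of_injOn (hinj _ (fun x hx => by
            have := hQlt x (Finset.mem_of_mem_filter _ hx); omega)), hPc]
      by_cases hjQ : j ∈ Q
      · have hQpart : cnt Q j + ((Q.filter (fun x => j < x)).card + 1) = n₁ - a := by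
          have h1 := Finset.card_filter_add_card_filter_not (s := Q) (p := (· < j))
          rw [hQc] at h1
          have h2 : Q.filter (fun x => ¬ x < j) = insert j (Q.filter (fun x => j < x)) := by
            ext x
            simp only [Finset.mem_filter, Finset.mem_insert]
            constructor
            · rintro ⟨hxQ, hxj⟩
              rcases Nat.eq_or_lt_of_le (Nat.le_of_not_lt hxj) with h | h
              · exact Or.inl h.symm
              · exact Or.inr ⟨hxQ, h⟩
            · rintro (rfl | ⟨hxQ, hxj⟩)
              · exact ⟨hjQ, by omega⟩
              · exact ⟨hxQ, by omega⟩
          rw [h2, Finset.card_insert_of_notMem (by simp)] at h1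
          rw [cnt]
          omega
        show mergeN ru rv Q j = mergeN u' v' A (n₁ + n₂ - 1 - j)
        rw [mergeN, mergeN, if_pos hjQ, if_pos (hmem.mpr hjQ), hcntA, hru]
        show u' (n₁ - 1 - cnt Q j) = u' (a + (Q.filter (fun x => j < x)).card)
        congr 1
        omega
      · have hQpart : cnt Q j + (Q.filter (fun x => j < x)).card = n₁ - a := by
          have h1 := Finset.card_filter_add_card_filter_not (s := Q) (p := (· < j))
          rw [hQc] at h1
          have h2 : Q.filter (fun x => ¬ x < j) = Q.filter (fun x => j < x) := by
            apply Finset.filter_congr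
            intro x hx
            have : x ≠ j := fun h => hjQ (h ▸ hx)
            simp
            omega
          rw [h2] at h1
          rw [cnt]
          omega
        have hsub := sub_cnt_lt hQ hj hjQ
        rw [hQc] at hsub
        show mergeN ru rv Q j = mergeN u' v' A (n₁ + n₂ - 1 - j)
        rw [mergeN, mergeN, if_neg hjQ, if_neg (fun h => hjQ (hmem.mp h)), hcntA, hrv]
        show v' (n₂ - 1 - (j - cnt Q j)) = v' ((n₁ + n₂ - 1 - j) - (a + (Q.filter (fun x => j < x)).card))
        congr 1
        have := cnt_le Q j
        omega

end chsec
end RPFC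

/-- **Rough paths from families of shuffle characters**: given a family `χ^t`, `t ∈ ℝ`, of
characters of the shuffle algebra over `{1,…,d}`, the functional
`Γⁿ_{ts}(i₁,…,iₙ) := Σ_{k=0}^{n} (−1)^{n−k} χ^t(i₁,…,i_k) χ^s(iₙ,…,i_{k+1})`
satisfies the Chen and shuffle properties. -/
theorem rough_path_from_characters
    (d : ℕ) (hd : 1 ≤ d) (χ : ℝ → (n : ℕ) → (Fin n → Fin d) → ℝ)
    (hempty : ∀ t : ℝ, χ t 0 (fun i => i.elim0) = 1)
    (hshuffle : ∀ (t : ℝ) (n₁ n₂ : ℕ) (u : Fin n₁ → Fin d) (v : Fin n₂ → Fin d),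
      χ t n₁ u * χ t n₂ v = ∑ S : {S : Finset (Fin (n₁ + n₂)) // S.card = n₁},
        χ t (n₁ + n₂) (shuffleWord u v S.1 S.2))
    (X : (n : ℕ) → (Fin n → Fin d) → ℝ → ℝ → ℝ)
    (hX : ∀ (n : ℕ) (w : Fin n → Fin d) (t s : ℝ),
      X n w t s = ∑ k : Fin (n + 1), (-1 : ℝ) ^ (n - k.1) *
        (χ t k.1 (fun j => w ⟨j.1, by have h1 := j.isLt; have h2 := k.isLt; omega⟩) *
          χ s (n - k.1) (fun j => w ⟨n - 1 - j.1, by have h1 := j.isLt; omega⟩))) :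
    -- Chen property
    (∀ n : ℕ, 2 ≤ n → ∀ (w : Fin n → Fin d) (t u s : ℝ),
      X n w t s = X n w t u + X n w u s +
        ∑ k ∈ Finset.univ.filter (fun k : Fin n => 0 < k.1),
          X k.1 (fun j => w ⟨j.1, by have h1 := j.isLt; have h2 := k.isLt; omega⟩) t u *
            X (n - k.1)
              (fun j => w ⟨k.1 + j.1, by have h1 := j.isLt; have h2 := k.isLt; omega⟩) u s) ∧
    -- shuffle property
    (∀ n₁ n₂ : ℕ, 1 ≤ n₁ → 1 ≤ n₂ →
      ∀ (u : Fin n₁ → Fin d) (v : Fin n₂ → Fin d) (t s : ℝ),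
        X n₁ u t s * X n₂ v t s =
          ∑ S : {S : Finset (Fin (n₁ + n₂)) // S.card = n₁},
            X (n₁ + n₂) (shuffleWord u v S.1 S.2) t s) := by
  constructor
  · intro n hn w t u s
    exact RPFC.chen χ hd X hX hempty
      (fun t {m} hm y => RPFC.antip χ
        (fun t {k m} hk y₁ y₂ => RPFC.hshuf_split χ hd hshuffle t hk y₁ y₂) t hm y)
      n hn w t u s
  · intro n₁ n₂ hn₁ hn₂ u v t s
    exact RPFC.shufprop χ hd X hX
      (fun t p q y₁ y₂ => RPFC.hshuf χ hd hshuffle t p q y₁ y₂)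
      n₁ n₂ hn₁ hn₂ u v t s
end
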